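/- arXiv:2412.15390 — 6 statements merged into one kernel-verified Lean document; each statement's English description precedes it below -/
import Mathlib

section
/- A representation (ρ₁,ρ₂,ρ₃) of the 3-Kronecker quiver of dimension vector (2,3) is stable if and only if the images of ρ₁, ρ₂, ρ₃ together span ℂ³ and, for every nonzero v ∈ ℂ², the span of ρ₁(v), ρ₂(v), ρ₃(v) has dimension at least 2. -/
open MvPolynomial TensorProduct

noncomputable section

/-- The polynomial ring ℂ[x,y,z]. -/
abbrev Pxyz : Type := MvPolynomial (Fin 3) ℂ

/-- The linear form in ℂ[x,y,z] with coefficient vector `w`,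
identifying `W = ℂ³` with the space of linear forms via the basis `x, y, z`. -/
def toPoly (w : Fin 3 → ℂ) : Pxyz := ∑ k, MvPolynomial.C (w k) * MvPolynomial.X k

/-- The representation `(ρ₁, ρ₂, ρ₃)` of the 3-Kronecker quiver of dimension vector `(2,3)`
determined by a 2×3 matrix `r` of linear forms (given by their coefficient vectors), via
`v·r = x·ρ₁(v) + y·ρ₂(v) + z·ρ₃(v)`. -/
def repOf (r : Matrix (Fin 2) (Fin 3) (Fin 3 → ℂ)) (k : Fin 3) :
    (Fin 2 → ℂ) →ₗ[ℂ] (Fin 3 → ℂ) :=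
  ∑ i : Fin 2, (LinearMap.proj i : (Fin 2 → ℂ) →ₗ[ℂ] ℂ).smulRight (fun j => r i j k)

/-- Stability (for the stability parameter θ = (3,−2)) of a representation of the 3-Kronecker
quiver of dimension vector (2,3): for every subrepresentation `(U₁, U₂)` other than `(0,0)` and
`(ℂ², ℂ³)` one has `3·dim U₁ < 2·dim U₂`. -/
def KStable (ρ : Fin 3 → ((Fin 2 → ℂ) →ₗ[ℂ] (Fin 3 → ℂ))) : Prop :=
  ∀ (U₁ : Submodule ℂ (Fin 2 → ℂ)) (U₂ : Submodule ℂ (Fin 3 → ℂ)),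
    (∀ k, U₁.map (ρ k) ≤ U₂) →
    ¬(U₁ = ⊥ ∧ U₂ = ⊥) → ¬(U₁ = ⊤ ∧ U₂ = ⊤) →
    3 * Module.finrank ℂ U₁ < 2 * Module.finrank ℂ U₂

/-- The three maximal minors of a 2×3 matrix of polynomials: `minorP m k` is (up to sign) the
2×2 minor obtained by deleting the `k`-th column. -/
def minorP (m : Matrix (Fin 2) (Fin 3) Pxyz) (k : Fin 3) : Pxyz :=
  m 0 (k + 1) * m 1 (k + 2) - m 0 (k + 2) * m 1 (k + 1)

/-- The three maximal minors of a 2×3 matrix of linear forms; they are elements of `S²W`,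
i.e. homogeneous quadratic polynomials in ℂ[x,y,z]. -/
def minor (r : Matrix (Fin 2) (Fin 3) (Fin 3 → ℂ)) (k : Fin 3) : Pxyz :=
  minorP (Matrix.of fun i j => toPoly (r i j)) k

/-- `H_r ⊆ S²W`, the linear span of the three maximal minors of `r`. -/
def Hr (r : Matrix (Fin 2) (Fin 3) (Fin 3 → ℂ)) : Submodule ℂ Pxyz :=
  Submodule.span ℂ (Set.range (minor r))

/-- A representation `(ρ₁,ρ₂,ρ₃)` of the 3-Kronecker quiver of dimension
vector `(2,3)` is stable if and only if the images of `ρ₁, ρ₂, ρ₃` together span `ℂ³` and,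
for every nonzero `v ∈ ℂ²`, the span of `ρ₁(v), ρ₂(v), ρ₃(v)` has dimension at least 2. -/
theorem stmt0 (ρ : Fin 3 → ((Fin 2 → ℂ) →ₗ[ℂ] (Fin 3 → ℂ))) :
    KStable ρ ↔
      ((⨆ k, LinearMap.range (ρ k)) = ⊤ ∧
        ∀ v : Fin 2 → ℂ, v ≠ 0 →
          2 ≤ Module.finrank ℂ (Submodule.span ℂ (Set.range fun k => ρ k v))) := by
  constructor
  · intro hs
    constructor
    · by_contra hne
      have hmap : ∀ k, (⊤ : Submodule ℂ (Fin 2 → ℂ)).map (ρ k) ≤ ⨆ k, LinearMap.range (ρ k) := by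
        intro k
        rw [← LinearMap.range_eq_map]
        exact le_iSup (fun k => LinearMap.range (ρ k)) k
      have h := hs ⊤ (⨆ k, LinearMap.range (ρ k)) hmap
        (by simp) (fun h => hne h.2)
      have h2 : Module.finrank ℂ (⊤ : Submodule ℂ (Fin 2 → ℂ)) = 2 := by simp
      have h3 : Module.finrank ℂ ((⨆ k, LinearMap.range (ρ k)) : Submodule ℂ (Fin 3 → ℂ)) ≤ 3 := by
        have := Submodule.finrank_le ((⨆ k, LinearMap.range (ρ k)) : Submodule ℂ (Fin 3 → ℂ))
        simpa using this
      omega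
    · intro v hv
      set U₂ := Submodule.span ℂ (Set.range fun k => ρ k v) with hU₂
      by_cases htop : U₂ = ⊤
      · rw [htop]; simp
      have hmap : ∀ k, (Submodule.span ℂ {v}).map (ρ k) ≤ U₂ := by
        intro k
        rw [Submodule.map_span, Set.image_singleton, Submodule.span_le,
          Set.singleton_subset_iff]
        exact Submodule.subset_span ⟨k, rfl⟩
      have h := hs (Submodule.span ℂ {v}) U₂ hmap
        (fun h => hv (by simpa using h.1)) (fun h => htop h.2)
      rw [finrank_span_singleton hv] at h
      omega
  · rintro ⟨h1, h2⟩ U₁ U₂ hmap hbot htop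
    have hle1 : Module.finrank ℂ U₁ ≤ 2 := by
      have := Submodule.finrank_le U₁; simpa using this
    have hle2 : Module.finrank ℂ U₂ ≤ 3 := by
      have := Submodule.finrank_le U₂; simpa using this
    interval_cases h : Module.finrank ℂ U₁
    · -- U₁ = ⊥, so U₂ ≠ ⊥
      have hU1 : U₁ = ⊥ := Submodule.finrank_eq_zero.mp h
      have hU2 : U₂ ≠ ⊥ := fun hb => hbot ⟨hU1, hb⟩
      have : Module.finrank ℂ U₂ ≠ 0 := fun h0 => hU2 (Submodule.finrank_eq_zero.mp h0)
      omega
    · -- dim U₁ = 1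
      have hU1 : U₁ ≠ ⊥ := by
        intro hb; rw [hb] at h; simp at h
      obtain ⟨v, hvU, hv⟩ := Submodule.exists_mem_ne_zero_of_ne_bot hU1
      have hspan : Submodule.span ℂ (Set.range fun k => ρ k v) ≤ U₂ := by
        rw [Submodule.span_le]
        rintro _ ⟨k, rfl⟩
        exact hmap k ⟨v, hvU, rfl⟩
      have := (h2 v hv).trans (Submodule.finrank_mono hspan)
      omega
    · -- U₁ = ⊤
      have hU1 : U₁ = ⊤ := by
        apply Submodule.eq_top_of_finrank_eq
        simpa using h
      have hU2 : U₂ = ⊤ := by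
        rw [eq_top_iff, ← h1]
        apply iSup_le
        intro k
        rw [LinearMap.range_eq_map, ← hU1]
        exact hmap k
      exact absurd ⟨hU1, hU2⟩ htop
end
end

section
/- A representation of the 3-Kronecker quiver of dimension vector (2,3) determined by a 2×3 matrix r with entries in W is stable if and only if the three maximal minors of r are linearly independent in S²W. -/
open MvPolynomial TensorProduct

noncomputable section

namespace Stmt1Aux


lemma coeff_toPoly (w : Fin 3 → ℂ) (k : Fin 3) :
    MvPolynomial.coeff (Finsupp.single k 1) (toPoly w) = w k := by
  classical
  simp [toPoly, MvPolynomial.coeff_sum, MvPolynomial.coeff_C_mul, MvPolynomial.coeff_X',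
    Finsupp.single_left_inj (one_ne_zero)]

lemma toPoly_inj {w w' : Fin 3 → ℂ} (h : toPoly w = toPoly w') : w = w' := by
  funext k
  rw [← coeff_toPoly w k, h, coeff_toPoly]

lemma toPoly_zero : toPoly 0 = 0 := by simp [toPoly]

lemma toPoly_eq_zero {w : Fin 3 → ℂ} (h : toPoly w = 0) : w = 0 :=
  toPoly_inj (by rw [h, toPoly_zero])

lemma toPoly_add (w w' : Fin 3 → ℂ) : toPoly (w + w') = toPoly w + toPoly w' := by
  simp [toPoly, add_mul, Finset.sum_add_distrib]

lemma toPoly_smul (c : ℂ) (w : Fin 3 → ℂ) : toPoly (c • w) = C c * toPoly w := by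
  simp [toPoly, Finset.mul_sum, mul_assoc]

lemma minor_0 (r : Matrix (Fin 2) (Fin 3) (Fin 3 → ℂ)) :
    minor r 0 = toPoly (r 0 1) * toPoly (r 1 2) - toPoly (r 0 2) * toPoly (r 1 1) := rfl

lemma minor_1 (r : Matrix (Fin 2) (Fin 3) (Fin 3 → ℂ)) :
    minor r 1 = toPoly (r 0 2) * toPoly (r 1 0) - toPoly (r 0 0) * toPoly (r 1 2) := rfl

lemma minor_2 (r : Matrix (Fin 2) (Fin 3) (Fin 3 → ℂ)) :
    minor r 2 = toPoly (r 0 0) * toPoly (r 1 1) - toPoly (r 0 1) * toPoly (r 1 0) := rfl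

lemma repOf_apply (r : Matrix (Fin 2) (Fin 3) (Fin 3 → ℂ)) (k : Fin 3) (v : Fin 2 → ℂ) (j : Fin 3) :
    repOf r k v j = v 0 * r 0 j k + v 1 * r 1 j k := by
  simp [repOf, Fin.sum_univ_two]

lemma eval_toPoly (w x : Fin 3 → ℂ) : eval x (toPoly w) = ∑ k, w k * x k := by
  simp [toPoly]



lemma dot_single (a : Fin 3 → ℂ) (j : Fin 3) (c : ℂ) :
    (∑ k, a k * (Pi.single j c : Fin 3 → ℂ) k) = a j * c := by
  simp [Pi.single_apply, mul_ite]

lemma ker_incl {a b : Fin 3 → ℂ} (ha : a ≠ 0)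
    (h : ∀ w : Fin 3 → ℂ, (∑ k, a k * w k) = 0 → (∑ k, b k * w k) = 0) :
    ∃ lam : ℂ, b = lam • a := by
  obtain ⟨k₀, hk₀⟩ := Function.ne_iff.mp ha
  have hk₀' : a k₀ ≠ 0 := hk₀
  refine ⟨b k₀ / a k₀, funext fun j => ?_⟩
  have hw := h ((Pi.single j (a k₀) : Fin 3 → ℂ) - (Pi.single k₀ (a j) : Fin 3 → ℂ)) ?_
  · have h1 : (∑ k, b k * (((Pi.single j (a k₀) : Fin 3 → ℂ) - (Pi.single k₀ (a j) : Fin 3 → ℂ)) k))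
        = b j * a k₀ - b k₀ * a j := by
      simp only [Pi.sub_apply, mul_sub, Finset.sum_sub_distrib, dot_single]
    rw [h1] at hw
    simp only [Pi.smul_apply, smul_eq_mul]
    field_simp
    linear_combination hw
  · have h1 : (∑ k, a k * (((Pi.single j (a k₀) : Fin 3 → ℂ) - (Pi.single k₀ (a j) : Fin 3 → ℂ)) k))
        = a j * a k₀ - a k₀ * a j := by
      simp only [Pi.sub_apply, mul_sub, Finset.sum_sub_distrib, dot_single]
    rw [h1]; ring

lemma split {a b c : Fin 3 → ℂ}
    (h : ∀ w : Fin 3 → ℂ, (∑ k, a k * w k) = 0 → (∑ k, b k * w k) = 0 ∨ (∑ k, c k * w k) = 0) :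
    (∀ w : Fin 3 → ℂ, (∑ k, a k * w k) = 0 → (∑ k, b k * w k) = 0) ∨
    (∀ w : Fin 3 → ℂ, (∑ k, a k * w k) = 0 → (∑ k, c k * w k) = 0) := by
  by_contra hcon
  push_neg at hcon
  obtain ⟨⟨u, hu, hbu⟩, ⟨v, hv, hcv⟩⟩ := hcon
  have hcu : (∑ k, c k * u k) = 0 := (h u hu).resolve_left hbu
  have hbv : (∑ k, b k * v k) = 0 := (h v hv).resolve_right hcv
  have huv : (∑ k, a k * (u + v) k) = 0 := by
    simp only [Pi.add_apply, mul_add, Finset.sum_add_distrib, hu, hv, add_zero]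
  rcases h (u + v) huv with h' | h' <;>
    simp only [Pi.add_apply, mul_add, Finset.sum_add_distrib] at h'
  · rw [hbv, add_zero] at h'; exact hbu h'
  · rw [hcu, zero_add] at h'; exact hcv h'



lemma g_cases {g : Fin 3 → ℂ} (hg : g ≠ 0) : g 0 ≠ 0 ∨ g 1 ≠ 0 ∨ g 2 ≠ 0 := by
  by_contra h
  push_neg at h
  obtain ⟨h0, h1, h2⟩ := h
  apply hg
  funext j
  fin_cases j <;> assumption

lemma exists_pq {g : Fin 3 → ℂ} (hg : g ≠ 0) :
    ∃ p q : Fin 3 → ℂ,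
      p 1 * q 2 - p 2 * q 1 = g 0 ∧ p 2 * q 0 - p 0 * q 2 = g 1 ∧ p 0 * q 1 - p 1 * q 0 = g 2 := by
  rcases g_cases hg with h | h | h
  · refine ⟨![-(g 1)/(g 0), 1, 0], ![-(g 2), 0, g 0], ?_, ?_, ?_⟩ <;>
      simp <;> field_simp
  · refine ⟨![1, -(g 0)/(g 1), 0], ![0, g 2, -(g 1)], ?_, ?_, ?_⟩ <;>
      simp <;> field_simp <;> ring
  · refine ⟨![0, 1, -(g 1)/(g 2)], ![-(g 2), 0, g 0], ?_, ?_, ?_⟩ <;>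
      simp <;> field_simp <;> ring

lemma perp {p q g : Fin 3 → ℂ}
    (e0 : p 1 * q 2 - p 2 * q 1 = g 0) (e1 : p 2 * q 0 - p 0 * q 2 = g 1)
    (e2 : p 0 * q 1 - p 1 * q 0 = g 2) (hg : g ≠ 0) (f : Fin 3 → Fin 3 → ℂ)
    (hp : p 0 • f 0 + p 1 • f 1 + p 2 • f 2 = 0)
    (hq : q 0 • f 0 + q 1 • f 1 + q 2 • f 2 = 0) :
    ∃ a : Fin 3 → ℂ, ∀ j, f j = g j • a := by
  have hpk : ∀ k, p 0 * f 0 k + p 1 * f 1 k + p 2 * f 2 k = 0 := by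
    intro k; have := congrFun hp k; simpa using this
  have hqk : ∀ k, q 0 * f 0 k + q 1 * f 1 k + q 2 * f 2 k = 0 := by
    intro k; have := congrFun hq k; simpa using this
  have A0 : ∀ k, g 2 * f 1 k - g 1 * f 2 k = 0 := fun k => by
    linear_combination (p 0) * hqk k - (q 0) * hpk k - (f 1 k) * e2 + (f 2 k) * e1
  have A1 : ∀ k, g 0 * f 2 k - g 2 * f 0 k = 0 := fun k => by
    linear_combination (p 1) * hqk k - (q 1) * hpk k - (f 2 k) * e0 + (f 0 k) * e2
  have A2 : ∀ k, g 1 * f 0 k - g 0 * f 1 k = 0 := fun k => by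
    linear_combination (p 2) * hqk k - (q 2) * hpk k - (f 0 k) * e1 + (f 1 k) * e0
  have main : ∀ k₀ : Fin 3, g k₀ ≠ 0 → (∀ j k, g k₀ * f j k = g j * f k₀ k) →
      ∃ a : Fin 3 → ℂ, ∀ j, f j = g j • a := by
    intro k₀ hk₀ key
    refine ⟨(g k₀)⁻¹ • f k₀, fun j => funext fun k => ?_⟩
    simp only [Pi.smul_apply, smul_eq_mul]
    field_simp
    linear_combination key j k
  rcases g_cases hg with h | h | h
  · refine main 0 h (fun j k => ?_)
    fin_cases j
    · show g 0 * f 0 k = g 0 * f 0 k; ring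
    · show g 0 * f 1 k = g 1 * f 0 k; linear_combination - A2 k
    · show g 0 * f 2 k = g 2 * f 0 k; linear_combination A1 k
  · refine main 1 h (fun j k => ?_)
    fin_cases j
    · show g 1 * f 0 k = g 0 * f 1 k; linear_combination A2 k
    · show g 1 * f 1 k = g 1 * f 1 k; ring
    · show g 1 * f 2 k = g 2 * f 1 k; linear_combination - A0 k
  · refine main 2 h (fun j k => ?_)
    fin_cases j
    · show g 2 * f 0 k = g 0 * f 2 k; linear_combination - A1 k
    · show g 2 * f 1 k = g 1 * f 2 k; linear_combination A0 k
    · show g 2 * f 2 k = g 2 * f 2 k; ring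





/-- The predicate (A): some nonzero `v` is mapped into a line. -/
def PA (r : Matrix (Fin 2) (Fin 3) (Fin 3 → ℂ)) : Prop :=
  ∃ v : Fin 2 → ℂ, v ≠ 0 ∧ ∃ u a : Fin 3 → ℂ,
    ∀ j, v 0 • r 0 j + v 1 • r 1 j = u j • a

/-- The predicate (B): a constant linear relation among the columns. -/
def PB (r : Matrix (Fin 2) (Fin 3) (Fin 3 → ℂ)) : Prop :=
  ∃ c : Fin 3 → ℂ, c ≠ 0 ∧ ∀ i, c 0 • r i 0 + c 1 • r i 1 + c 2 • r i 2 = 0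

lemma factor {x y z w : Fin 3 → ℂ} (hx : x ≠ 0)
    (heq : toPoly x * toPoly w = toPoly y * toPoly z) :
    (∃ lam : ℂ, y = lam • x) ∨ (∃ lam : ℂ, z = lam • x) := by
  have h : ∀ v : Fin 3 → ℂ, (∑ k, x k * v k) = 0 →
      (∑ k, y k * v k) = 0 ∨ (∑ k, z k * v k) = 0 := by
    intro v hv
    have := congrArg (eval v) heq
    simp only [map_mul, eval_toPoly] at this
    rw [hv, zero_mul] at this
    exact mul_eq_zero.mp this.symm
  rcases split h with h' | h'
  · exact Or.inl (ker_incl hx h')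
  · exact Or.inr (ker_incl hx h')

lemma binet (r : Matrix (Fin 2) (Fin 3) (Fin 3 → ℂ)) (p q : Fin 3 → ℂ) :
    (C (p 0) * toPoly (r 0 0) + C (p 1) * toPoly (r 0 1) + C (p 2) * toPoly (r 0 2)) *
      (C (q 0) * toPoly (r 1 0) + C (q 1) * toPoly (r 1 1) + C (q 2) * toPoly (r 1 2)) -
    (C (q 0) * toPoly (r 0 0) + C (q 1) * toPoly (r 0 1) + C (q 2) * toPoly (r 0 2)) *
      (C (p 0) * toPoly (r 1 0) + C (p 1) * toPoly (r 1 1) + C (p 2) * toPoly (r 1 2)) =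
    C (p 1 * q 2 - p 2 * q 1) * minor r 0 + C (p 2 * q 0 - p 0 * q 2) * minor r 1 +
      C (p 0 * q 1 - p 1 * q 0) * minor r 2 := by
  rw [minor_0, minor_1, minor_2]
  simp only [map_mul, map_sub]
  ring

lemma toPoly_comb3 (c : Fin 3 → ℂ) (w : Fin 3 → (Fin 3 → ℂ)) :
    toPoly (c 0 • w 0 + c 1 • w 1 + c 2 • w 2) =
      C (c 0) * toPoly (w 0) + C (c 1) * toPoly (w 1) + C (c 2) * toPoly (w 2) := by
  rw [toPoly_add, toPoly_add, toPoly_smul, toPoly_smul, toPoly_smul]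

lemma paOrPb_of_rel {r : Matrix (Fin 2) (Fin 3) (Fin 3 → ℂ)} {g : Fin 3 → ℂ} (hg : g ≠ 0)
    (hrel : C (g 0) * minor r 0 + C (g 1) * minor r 1 + C (g 2) * minor r 2 = 0) :
    PA r ∨ PB r := by
  obtain ⟨p, q, e0, e1, e2⟩ := exists_pq hg
  have hpq : ∀ lam : ℂ, q ≠ lam • p := by
    intro lam hql
    apply hg
    funext j
    fin_cases j
    · show g 0 = 0
      rw [← e0, hql]; simp [Pi.smul_apply]; ring
    · show g 1 = 0
      rw [← e1, hql]; simp [Pi.smul_apply]; ring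
    · show g 2 = 0
      rw [← e2, hql]; simp [Pi.smul_apply]; ring
  have hp0 : p ≠ 0 := by
    intro h0
    apply hg
    funext j
    fin_cases j
    · show g 0 = 0; rw [← e0, h0]; simp
    · show g 1 = 0; rw [← e1, h0]; simp
    · show g 2 = 0; rw [← e2, h0]; simp
  have hq0 : q ≠ 0 := by
    intro h0
    apply hg
    funext j
    fin_cases j
    · show g 0 = 0; rw [← e0, h0]; simp
    · show g 1 = 0; rw [← e1, h0]; simp
    · show g 2 = 0; rw [← e2, h0]; simp
  set P0 : Fin 3 → ℂ := p 0 • r 0 0 + p 1 • r 0 1 + p 2 • r 0 2 with hP0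
  set P1 : Fin 3 → ℂ := p 0 • r 1 0 + p 1 • r 1 1 + p 2 • r 1 2 with hP1
  set Q0 : Fin 3 → ℂ := q 0 • r 0 0 + q 1 • r 0 1 + q 2 • r 0 2 with hQ0
  set Q1 : Fin 3 → ℂ := q 0 • r 1 0 + q 1 • r 1 1 + q 2 • r 1 2 with hQ1
  have hkey : toPoly P0 * toPoly Q1 = toPoly Q0 * toPoly P1 := by
    have hb := binet r p q
    rw [e0, e1, e2, hrel] at hb
    have h0 := toPoly_comb3 p (fun j => r 0 j)
    have h1 := toPoly_comb3 p (fun j => r 1 j)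
    have h2 := toPoly_comb3 q (fun j => r 0 j)
    have h3 := toPoly_comb3 q (fun j => r 1 j)
    rw [← hP0] at h0
    rw [← hP1] at h1
    rw [← hQ0] at h2
    rw [← hQ1] at h3
    rw [← h0, ← h1, ← h2, ← h3] at hb
    linear_combination hb
  by_cases hP0z : toPoly P0 = 0
  -- case P0 = 0
  · have hP0v : P0 = 0 := toPoly_eq_zero hP0z
    rw [hP0z, zero_mul] at hkey
    rcases mul_eq_zero.mp hkey.symm with hz | hz
    · -- Q0 = 0 as well: row 0 is orthogonal to p and q
      have hQ0v : Q0 = 0 := toPoly_eq_zero hz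
      obtain ⟨a, ha⟩ := perp e0 e1 e2 hg (fun j => r 0 j) hP0v hQ0v
      refine Or.inl ⟨![1, 0], ?_, g, a, fun j => ?_⟩
      · intro h0
        have := congrFun h0 0
        simp at this
      · simp only [Matrix.cons_val_zero, Matrix.cons_val_one, Matrix.head_cons,
          one_smul, zero_smul, add_zero]
        exact ha j
    · -- P1 = 0: p is orthogonal to both rows
      have hP1v : P1 = 0 := toPoly_eq_zero hz
      refine Or.inr ⟨p, hp0, fun i => ?_⟩
      fin_cases i
      · exact hP0v
      · exact hP1v
  -- case P0 ≠ 0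
  · have hP0v : P0 ≠ 0 := fun h => hP0z (by rw [h, toPoly_zero])
    rcases factor hP0v hkey with ⟨lam, hlam⟩ | ⟨lam, hlam⟩
    · -- Q0 = lam • P0 : then Q1 = lam • P1, giving a column relation q - lam • p
      have hQ1lam : Q1 = lam • P1 := by
        apply toPoly_inj
        rw [toPoly_smul]
        apply mul_left_cancel₀ hP0z
        rw [hkey, hlam, toPoly_smul]
        ring
      refine Or.inr ⟨q - lam • p, ?_, fun i => ?_⟩
      · intro h0
        exact hpq lam (by rwa [sub_eq_zero] at h0)
      · have hcomb : (q - lam • p) 0 • r i 0 + (q - lam • p) 1 • r i 1 + (q - lam • p) 2 • r i 2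
            = (q 0 • r i 0 + q 1 • r i 1 + q 2 • r i 2)
              - lam • (p 0 • r i 0 + p 1 • r i 1 + p 2 • r i 2) := by
          simp only [Pi.sub_apply, Pi.smul_apply, smul_eq_mul, sub_smul, mul_smul]
          module
        rw [hcomb]
        fin_cases i
        · show Q0 - lam • P0 = 0
          rw [hlam]; abel
        · show Q1 - lam • P1 = 0
          rw [hQ1lam]; abel
    · -- P1 = lam • P0 : then Q1 = lam • Q0, and row1 - lam • row0 is orthogonal to p, q
      have hQ1lam : Q1 = lam • Q0 := by
        apply toPoly_inj
        rw [toPoly_smul]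
        apply mul_left_cancel₀ hP0z
        rw [hkey, hlam, toPoly_smul]
        ring
      have hfp : p 0 • (r 1 0 - lam • r 0 0) + p 1 • (r 1 1 - lam • r 0 1)
          + p 2 • (r 1 2 - lam • r 0 2) = 0 := by
        have : P1 - lam • P0 = 0 := by rw [hlam]; abel
        rw [hP1, hP0] at this
        rw [← this]
        simp only [smul_sub, smul_smul, mul_comm]
        module
      have hfq : q 0 • (r 1 0 - lam • r 0 0) + q 1 • (r 1 1 - lam • r 0 1)
          + q 2 • (r 1 2 - lam • r 0 2) = 0 := by
        have : Q1 - lam • Q0 = 0 := by rw [hQ1lam]; abel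
        rw [hQ1, hQ0] at this
        rw [← this]
        simp only [smul_sub, smul_smul, mul_comm]
        module
      obtain ⟨a, ha⟩ := perp e0 e1 e2 hg (fun j => r 1 j - lam • r 0 j) hfp hfq
      refine Or.inl ⟨![-lam, 1], ?_, g, a, fun j => ?_⟩
      · intro h0
        have := congrFun h0 1
        simp at this
      · simp only [Matrix.cons_val_zero, Matrix.cons_val_one, Matrix.head_cons]
        have := ha j
        rw [← this]
        module




lemma v_cases {v : Fin 2 → ℂ} (hv : v ≠ 0) : v 0 ≠ 0 ∨ v 1 ≠ 0 := by
  by_contra h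
  push_neg at h
  exact hv (funext fun j => by fin_cases j <;> simp [h.1, h.2])

lemma rel_of_pa {r : Matrix (Fin 2) (Fin 3) (Fin 3 → ℂ)} (h : PA r) :
    ∃ g : Fin 3 → ℂ, g ≠ 0 ∧
      C (g 0) * minor r 0 + C (g 1) * minor r 1 + C (g 2) * minor r 2 = 0 := by
  obtain ⟨v, hv, u, a, hva⟩ := h
  have Hj : ∀ j, C (v 0) * toPoly (r 0 j) + C (v 1) * toPoly (r 1 j)
      = C (u j) * toPoly a := by
    intro j
    have := congrArg toPoly (hva j)
    rwa [toPoly_add, toPoly_smul, toPoly_smul, toPoly_smul] at this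
  by_cases hu : u = 0
  · -- all minors vanish; use (1,0,0)
    subst hu
    have Hj' : ∀ j, C (v 0) * toPoly (r 0 j) + C (v 1) * toPoly (r 1 j) = 0 := by
      intro j; have := Hj j; simpa using this
    have hm0 : minor r 0 = 0 := by
      rcases v_cases hv with hv0 | hv1
      · apply mul_left_cancel₀ (show (C (v 0) : Pxyz) ≠ 0 by simpa using hv0)
        rw [minor_0, mul_zero]
        linear_combination (toPoly (r 1 2)) * Hj' 1 - toPoly (r 1 1) * Hj' 2
      · apply mul_left_cancel₀ (show (C (v 1) : Pxyz) ≠ 0 by simpa using hv1)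
        rw [minor_0, mul_zero]
        linear_combination (toPoly (r 0 1)) * Hj' 2 - toPoly (r 0 2) * Hj' 1
    refine ⟨![1, 0, 0], ?_, ?_⟩
    · intro h0; have := congrFun h0 0; simp at this
    · simp [hm0]
  · refine ⟨u, hu, ?_⟩
    rcases v_cases hv with hv0 | hv1
    · apply mul_left_cancel₀ (show (C (v 0) : Pxyz) ≠ 0 by simpa using hv0)
      rw [minor_0, minor_1, minor_2, mul_zero]
      linear_combination (C (u 0)) * (toPoly (r 1 2) * Hj 1 - toPoly (r 1 1) * Hj 2)
        + C (u 1) * (toPoly (r 1 0) * Hj 2 - toPoly (r 1 2) * Hj 0)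
        + C (u 2) * (toPoly (r 1 1) * Hj 0 - toPoly (r 1 0) * Hj 1)
    · apply mul_left_cancel₀ (show (C (v 1) : Pxyz) ≠ 0 by simpa using hv1)
      rw [minor_0, minor_1, minor_2, mul_zero]
      linear_combination (C (u 0)) * (toPoly (r 0 1) * Hj 2 - toPoly (r 0 2) * Hj 1)
        + C (u 1) * (toPoly (r 0 2) * Hj 0 - toPoly (r 0 0) * Hj 2)
        + C (u 2) * (toPoly (r 0 0) * Hj 1 - toPoly (r 0 1) * Hj 0)

lemma rel_of_pb {r : Matrix (Fin 2) (Fin 3) (Fin 3 → ℂ)} (h : PB r) :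
    ∃ g : Fin 3 → ℂ, g ≠ 0 ∧
      C (g 0) * minor r 0 + C (g 1) * minor r 1 + C (g 2) * minor r 2 = 0 := by
  obtain ⟨c, hc, hrel⟩ := h
  have Hi : ∀ i, C (c 0) * toPoly (r i 0) + C (c 1) * toPoly (r i 1)
      + C (c 2) * toPoly (r i 2) = 0 := by
    intro i
    have := congrArg toPoly (hrel i)
    rwa [toPoly_comb3 c (fun j => r i j), toPoly_zero] at this
  rcases g_cases hc with h0 | h1 | h2
  · refine ⟨![-(c 1), c 0, 0], ?_, ?_⟩
    · intro hz; have := congrFun hz 1; simp at this; exact h0 this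
    · show C (-(c 1)) * minor r 0 + C (c 0) * minor r 1 + C 0 * minor r 2 = 0
      rw [minor_0, minor_1, minor_2]
      simp only [map_neg, map_zero]
      linear_combination (toPoly (r 0 2)) * Hi 1 - toPoly (r 1 2) * Hi 0
  · refine ⟨![-(c 1), c 0, 0], ?_, ?_⟩
    · intro hz; have := congrFun hz 0; simp at this; exact h1 this
    · show C (-(c 1)) * minor r 0 + C (c 0) * minor r 1 + C 0 * minor r 2 = 0
      rw [minor_0, minor_1, minor_2]
      simp only [map_neg, map_zero]
      linear_combination (toPoly (r 0 2)) * Hi 1 - toPoly (r 1 2) * Hi 0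
  · refine ⟨![c 2, 0, -(c 0)], ?_, ?_⟩
    · intro hz; have := congrFun hz 0; simp at this; exact h2 this
    · show C (c 2) * minor r 0 + C 0 * minor r 1 + C (-(c 0)) * minor r 2 = 0
      rw [minor_0, minor_1, minor_2]
      simp only [map_neg, map_zero]
      linear_combination (toPoly (r 0 1)) * Hi 1 - toPoly (r 1 1) * Hi 0




open Module Submodule

lemma finrank_fun2 : finrank ℂ (Fin 2 → ℂ) = 2 := by simp
lemma finrank_fun3 : finrank ℂ (Fin 3 → ℂ) = 3 := by simp

lemma notKStable_of_pa {r : Matrix (Fin 2) (Fin 3) (Fin 3 → ℂ)} (h : PA r) :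
    ¬ KStable (repOf r) := by
  obtain ⟨v, hv, u, a, hva⟩ := h
  intro hK
  have hrep : ∀ k, repOf r k v = a k • u := by
    intro k
    funext j
    rw [repOf_apply]
    have := congrFun (hva j) k
    simp only [Pi.add_apply, Pi.smul_apply, smul_eq_mul] at this
    rw [this]
    simp only [Pi.smul_apply, smul_eq_mul]
    ring
  have hcon := hK (span ℂ {v}) (span ℂ {u}) ?_ ?_ ?_
  · rw [finrank_span_singleton hv] at hcon
    have hle : finrank ℂ (span ℂ {u} : Submodule ℂ (Fin 3 → ℂ)) ≤ 1 := by
      by_cases hu : u = 0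
      · subst hu
        rw [Submodule.span_zero_singleton]
        norm_num [finrank_bot]
      · rw [finrank_span_singleton hu]
    omega
  · intro k
    rw [Submodule.map_span, Set.image_singleton]
    apply span_le.mpr
    intro x hx
    rw [Set.mem_singleton_iff] at hx
    subst hx
    rw [hrep k]
    exact smul_mem _ _ (mem_span_singleton_self u)
  · rintro ⟨h1, -⟩
    exact hv (span_singleton_eq_bot.mp h1)
  · rintro ⟨h1, -⟩
    have := finrank_span_singleton (K := ℂ) hv
    rw [h1, finrank_top, finrank_fun2] at this
    norm_num at this

lemma notKStable_of_pb {r : Matrix (Fin 2) (Fin 3) (Fin 3 → ℂ)} (h : PB r) :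
    ¬ KStable (repOf r) := by
  obtain ⟨c, hc, hrel⟩ := h
  intro hK
  set f : (Fin 3 → ℂ) →ₗ[ℂ] ℂ := ∑ j, c j • LinearMap.proj j with hf
  have hfapp : ∀ x : Fin 3 → ℂ, f x = ∑ j, c j * x j := by
    intro x
    simp [hf, LinearMap.sum_apply]
  have hcon := hK ⊤ (LinearMap.ker f) ?_ ?_ ?_
  · have h2 : finrank ℂ (LinearMap.ker f) ≤ 3 := by
      have := Submodule.finrank_le (LinearMap.ker f)
      rwa [finrank_fun3] at this
    rw [finrank_top, finrank_fun2] at hcon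
    omega
  · intro k
    rintro x ⟨y, -, rfl⟩
    rw [LinearMap.mem_ker, hfapp]
    have e0 := congrFun (hrel 0) k
    have e1 := congrFun (hrel 1) k
    simp only [Pi.add_apply, Pi.smul_apply, smul_eq_mul, Pi.zero_apply] at e0 e1
    rw [Fin.sum_univ_three]
    simp only [repOf_apply]
    linear_combination (y 0) * e0 + (y 1) * e1
  · rintro ⟨h1, -⟩
    have hm : ((fun _ => (1:ℂ)) : Fin 2 → ℂ) ∈ (⊥ : Submodule ℂ (Fin 2 → ℂ)) := by
      rw [← h1]; exact mem_top
    rw [mem_bot] at hm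
    exact (by simpa using congrFun hm 0 : False)
  · rintro ⟨-, h2⟩
    obtain ⟨j₀, hj₀⟩ := Function.ne_iff.mp hc
    have hj₀' : c j₀ ≠ 0 := hj₀
    have : (Pi.single j₀ 1 : Fin 3 → ℂ) ∈ LinearMap.ker f := h2 ▸ mem_top
    rw [LinearMap.mem_ker, hfapp] at this
    rw [dot_single] at this
    simp at this
    exact hj₀' this

lemma pa_pb_of_notKStable {r : Matrix (Fin 2) (Fin 3) (Fin 3 → ℂ)}
    (h : ¬ KStable (repOf r)) : PA r ∨ PB r := by
  unfold KStable at h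
  push_neg at h
  obtain ⟨U₁, U₂, hmap, hnb, hnt, hle⟩ := h
  have hd1 : finrank ℂ U₁ ≤ 2 := by
    have := Submodule.finrank_le U₁
    rwa [finrank_fun2] at this
  rcases Nat.lt_or_ge (finrank ℂ U₁) 1 with h1 | h1
  · -- dim U₁ = 0
    have hU1 : U₁ = ⊥ := by
      have : finrank ℂ U₁ = 0 := by omega
      exact Submodule.finrank_eq_zero.mp this
    have hU2 : U₂ = ⊥ := by
      have : finrank ℂ U₂ = 0 := by
        rw [hU1, finrank_bot] at hle
        omega
      exact Submodule.finrank_eq_zero.mp this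
    exact absurd hU2 (hnb hU1)
  rcases Nat.lt_or_ge (finrank ℂ U₁) 2 with h2 | h2
  · -- dim U₁ = 1 : PA
    have ha1 : finrank ℂ U₁ = 1 := by omega
    have hb1 : finrank ℂ U₂ ≤ 1 := by
      rw [ha1] at hle
      omega
    have hU1nb : U₁ ≠ ⊥ := by
      intro hb
      rw [hb, finrank_bot] at ha1
      norm_num at ha1
    obtain ⟨v, hvU, hv⟩ := U₁.ne_bot_iff.mp hU1nb
    left
    have hmem : ∀ k, repOf r k v ∈ U₂ := fun k => hmap k ⟨v, hvU, rfl⟩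
    by_cases hU2 : U₂ = ⊥
    · refine ⟨v, hv, 0, 0, fun j => funext fun k => ?_⟩
      have : repOf r k v = 0 := by
        have := hmem k
        rw [hU2, mem_bot] at this
        exact this
      have hz := congrFun this j
      rw [repOf_apply] at hz
      simpa using hz
    · obtain ⟨u, huU, hu⟩ := U₂.ne_bot_iff.mp hU2
      have hsp : span ℂ {u} = U₂ := by
        apply Submodule.eq_of_le_of_finrank_le
        · rwa [span_le, Set.singleton_subset_iff]
        · rwa [finrank_span_singleton hu]
      have hcoef : ∀ k, ∃ d : ℂ, d • u = repOf r k v := by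
        intro k
        rw [← mem_span_singleton, hsp]
        exact hmem k
      choose a ha using hcoef
      refine ⟨v, hv, u, a, fun j => funext fun k => ?_⟩
      have := congrFun (ha k) j
      simp only [Pi.smul_apply, smul_eq_mul] at this
      rw [repOf_apply] at this
      simp only [Pi.add_apply, Pi.smul_apply, smul_eq_mul]
      rw [← this]
      ring
  · -- dim U₁ = 2 : PB
    have hU1 : U₁ = ⊤ := by
      apply Submodule.eq_top_of_finrank_eq
      rw [finrank_fun2]
      omega
    right
    have hU2 : U₂ ≠ ⊤ := fun ht => hnt hU1 ht
    obtain ⟨f, hf0, hfmap⟩ :=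
      Submodule.exists_dual_map_eq_bot_of_lt_top (lt_top_iff_ne_top.mpr hU2) inferInstance
    set c : Fin 3 → ℂ := fun j => f (Pi.single j 1) with hcdef
    have hfx : ∀ x : Fin 3 → ℂ, f x = ∑ j, x j * c j := by
      intro x
      have hxr : x = ∑ j, Pi.single j (x j) := by
        rw [Finset.univ_sum_single x]
      conv_lhs => rw [hxr]
      rw [map_sum]
      congr 1
      funext j
      have : (Pi.single j (x j) : Fin 3 → ℂ) = x j • (Pi.single j 1 : Fin 3 → ℂ) := by
        funext k
        simp [Pi.single_apply, mul_ite]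
      rw [this, map_smul]
      simp [hcdef]
    have hc : c ≠ 0 := by
      intro h0
      apply hf0
      apply LinearMap.ext
      intro x
      rw [hfx]
      simp [congrFun h0]
    have hann : ∀ x ∈ U₂, f x = 0 := by
      intro x hx
      have : f x ∈ U₂.map f := ⟨x, hx, rfl⟩
      rwa [hfmap, mem_bot] at this
    refine ⟨c, hc, fun i => funext fun k => ?_⟩
    have hmem : repOf r k (Pi.single i 1) ∈ U₂ := hmap k ⟨Pi.single i 1, hU1 ▸ mem_top, rfl⟩
    have hz := hann _ hmem
    rw [hfx] at hz
    simp only [Pi.add_apply, Pi.smul_apply, smul_eq_mul, Pi.zero_apply]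
    rw [Fin.sum_univ_three] at hz
    simp only [repOf_apply] at hz
    fin_cases i
    · simp only [Pi.single_apply] at hz
      norm_num at hz
      show c 0 * r 0 0 k + c 1 * r 0 1 k + c 2 * r 0 2 k = 0
      linear_combination hz
    · simp only [Pi.single_apply] at hz
      norm_num at hz
      show c 0 * r 1 0 k + c 1 * r 1 1 k + c 2 * r 1 2 k = 0
      linear_combination hz

lemma notLI_iff {r : Matrix (Fin 2) (Fin 3) (Fin 3 → ℂ)} :
    ¬ LinearIndependent ℂ (minor r) ↔ ∃ g : Fin 3 → ℂ, g ≠ 0 ∧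
      MvPolynomial.C (g 0) * minor r 0 + MvPolynomial.C (g 1) * minor r 1
        + MvPolynomial.C (g 2) * minor r 2 = 0 := by
  rw [Fintype.not_linearIndependent_iff]
  constructor
  · rintro ⟨g, hsum, k, hk⟩
    refine ⟨g, fun h0 => hk (by rw [h0]; rfl), ?_⟩
    rw [Fin.sum_univ_three] at hsum
    simpa [MvPolynomial.smul_eq_C_mul] using hsum
  · rintro ⟨g, hg, hrel⟩
    obtain ⟨k, hk⟩ := Function.ne_iff.mp hg
    exact ⟨g, by rw [Fin.sum_univ_three]; simpa [MvPolynomial.smul_eq_C_mul] using hrel, k, hk⟩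

end Stmt1Aux

/-- The representation of the 3-Kronecker quiver of dimension vector `(2,3)`
determined by a 2×3 matrix `r` with entries in `W` is stable if and only if the three maximal
minors of `r` are linearly independent in `S²W`. -/
theorem stmt1 (r : Matrix (Fin 2) (Fin 3) (Fin 3 → ℂ)) :
    KStable (repOf r) ↔ LinearIndependent ℂ (minor r) := by
  constructor
  · intro hst
    by_contra hLI
    obtain ⟨g, hg, hrel⟩ := Stmt1Aux.notLI_iff.mp hLI
    rcases Stmt1Aux.paOrPb_of_rel hg hrel with hpa | hpb
    · exact Stmt1Aux.notKStable_of_pa hpa hst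
    · exact Stmt1Aux.notKStable_of_pb hpb hst
  · intro hLI
    by_contra hst
    rcases Stmt1Aux.pa_pb_of_notKStable hst with hpa | hpb
    · exact Stmt1Aux.notLI_iff.mpr (Stmt1Aux.rel_of_pa hpa) hLI
    · exact Stmt1Aux.notLI_iff.mpr (Stmt1Aux.rel_of_pb hpb) hLI
end
end

section
/- If the 2×3 matrix r = (A B C; D E F) with entries in W determines a stable representation of the 3-Kronecker quiver of dimension vector (2,3), then the two tensors Syz¹_r and Syz²_r are linearly independent in W ⊗ S²W. -/
open MvPolynomial TensorProduct

noncomputable section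

/-- The first canonical syzygy tensor
`Syz¹_r = A⊗(BF−CE) − B⊗(AF−CD) + C⊗(AE−BD) ∈ W ⊗ S²W` for `r = (A B C; D E F)`,
viewed inside `ℂ[x,y,z] ⊗ ℂ[x,y,z]`. -/
def syz1 (r : Matrix (Fin 2) (Fin 3) (Fin 3 → ℂ)) : Pxyz ⊗[ℂ] Pxyz :=
  toPoly (r 0 0) ⊗ₜ[ℂ] (toPoly (r 0 1) * toPoly (r 1 2) - toPoly (r 0 2) * toPoly (r 1 1))
    - toPoly (r 0 1) ⊗ₜ[ℂ] (toPoly (r 0 0) * toPoly (r 1 2) - toPoly (r 0 2) * toPoly (r 1 0))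
    + toPoly (r 0 2) ⊗ₜ[ℂ] (toPoly (r 0 0) * toPoly (r 1 1) - toPoly (r 0 1) * toPoly (r 1 0))

/-- The second canonical syzygy tensor
`Syz²_r = D⊗(BF−CE) − E⊗(AF−CD) + F⊗(AE−BD) ∈ W ⊗ S²W` for `r = (A B C; D E F)`,
viewed inside `ℂ[x,y,z] ⊗ ℂ[x,y,z]`. -/
def syz2 (r : Matrix (Fin 2) (Fin 3) (Fin 3 → ℂ)) : Pxyz ⊗[ℂ] Pxyz :=
  toPoly (r 1 0) ⊗ₜ[ℂ] (toPoly (r 0 1) * toPoly (r 1 2) - toPoly (r 0 2) * toPoly (r 1 1))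
    - toPoly (r 1 1) ⊗ₜ[ℂ] (toPoly (r 0 0) * toPoly (r 1 2) - toPoly (r 0 2) * toPoly (r 1 0))
    + toPoly (r 1 2) ⊗ₜ[ℂ] (toPoly (r 0 0) * toPoly (r 1 1) - toPoly (r 0 1) * toPoly (r 1 0))

lemma eval_toPoly (w a : Fin 3 → ℂ) : eval w (toPoly a) = ∑ k, a k * w k := by
  simp [toPoly]

lemma eval_single_toPoly (a : Fin 3 → ℂ) (k : Fin 3) :
    eval (Pi.single k 1) (toPoly a) = a k := by
  rw [eval_toPoly, Finset.sum_eq_single k]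
  · simp
  · intro b _ hb; simp [Pi.single_apply, hb]
  · simp

lemma toPoly_eq_zero {a : Fin 3 → ℂ} (h : toPoly a = 0) : a = 0 := by
  funext k
  have := congrArg (eval (Pi.single k 1)) h
  rwa [eval_single_toPoly, map_zero] at this

lemma toPoly_ne_zero {a : Fin 3 → ℂ} (h : a ≠ 0) : toPoly a ≠ 0 :=
  fun hh => h (toPoly_eq_zero hh)

lemma toPoly_smul (c : ℂ) (a : Fin 3 → ℂ) : toPoly (c • a) = C c * toPoly a := by
  simp [toPoly, Finset.mul_sum]; ring_nf

lemma toPoly_add (a b : Fin 3 → ℂ) : toPoly (a + b) = toPoly a + toPoly b := by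
  simp [toPoly, ← Finset.sum_add_distrib]; congr 1; funext k; ring

def dotL (u : Fin 3 → ℂ) : (Fin 3 → ℂ) →ₗ[ℂ] ℂ := ∑ k, u k • (LinearMap.proj k)

lemma dotL_apply (u w : Fin 3 → ℂ) : dotL u w = ∑ k, u k * w k := by
  simp only [dotL, LinearMap.sum_apply, LinearMap.smul_apply, LinearMap.proj_apply, smul_eq_mul]

lemma dotL_single (u : Fin 3 → ℂ) (k : Fin 3) : dotL u (Pi.single k 1) = u k := by
  rw [dotL_apply, Finset.sum_eq_single k]
  · simp
  · intro b _ hb; simp [Pi.single_apply, hb]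
  · simp

lemma sub_union {M : Type*} [AddCommGroup M] [Module ℂ M] (K U V : Submodule ℂ M)
    (h : ∀ x ∈ K, x ∈ U ∨ x ∈ V) : K ≤ U ∨ K ≤ V := by
  by_contra hc
  push_neg at hc
  obtain ⟨hU, hV⟩ := hc
  rw [SetLike.not_le_iff_exists] at hU hV
  obtain ⟨x, hxK, hxU⟩ := hU
  obtain ⟨y, hyK, hyV⟩ := hV
  have hxV : x ∈ V := (h x hxK).resolve_left hxU
  have hyU : y ∈ U := (h y hyK).resolve_right hyV
  rcases h (x + y) (K.add_mem hxK hyK) with hu | hv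
  · exact hxU (by simpa using U.sub_mem hu hyU)
  · exact hyV (by simpa using V.sub_mem hv hxV)

lemma functional_smul {M : Type*} [AddCommGroup M] [Module ℂ M]
    (f g : M →ₗ[ℂ] ℂ) (z : M) (hz : f z = 1) (hker : LinearMap.ker f ≤ LinearMap.ker g) :
    g = (g z) • f := by
  ext w
  have : w - (f w) • z ∈ LinearMap.ker f := by simp [hz]
  have h2 := hker this
  simp only [LinearMap.mem_ker, map_sub, map_smul] at h2
  simp only [LinearMap.smul_apply, smul_eq_mul]
  have h3 := sub_eq_zero.mp h2
  rw [h3]; simp [mul_comm]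

lemma dotL_eq_zero {u : Fin 3 → ℂ} (h : dotL u = 0) : u = 0 := by
  funext k
  have := congrArg (fun f : (Fin 3 → ℂ) →ₗ[ℂ] ℂ => f (Pi.single k 1)) h
  simpa [dotL_single] using this

lemma ker_dotL_le {a b : Fin 3 → ℂ} (ha : a ≠ 0)
    (h : LinearMap.ker (dotL a) ≤ LinearMap.ker (dotL b)) : ∃ l : ℂ, b = l • a := by
  obtain ⟨k, hk⟩ : ∃ k, a k ≠ 0 := by
    by_contra hc; push_neg at hc; exact ha (funext fun k => hc k)
  have hz : dotL a ((a k)⁻¹ • (Pi.single k 1 : Fin 3 → ℂ)) = 1 := by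
    rw [map_smul, dotL_single, smul_eq_mul]; field_simp
  have hg := functional_smul (dotL a) (dotL b) _ hz h
  refine ⟨dotL b ((a k)⁻¹ • (Pi.single k 1 : Fin 3 → ℂ)), ?_⟩
  funext j
  have := congrArg (fun f : (Fin 3 → ℂ) →ₗ[ℂ] ℂ => f (Pi.single j 1)) hg
  simpa [dotL_single] using this

lemma finrank_ker_dotL {u : Fin 3 → ℂ} (hu : u ≠ 0) :
    Module.finrank ℂ (LinearMap.ker (dotL u)) = 2 := by
  obtain ⟨k, hk⟩ : ∃ k, u k ≠ 0 := by
    by_contra hc; push_neg at hc; exact hu (funext fun k => hc k)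
  have hsurj : LinearMap.range (dotL u) = ⊤ := by
    rw [LinearMap.range_eq_top]
    intro t
    refine ⟨(t / u k) • (Pi.single k 1 : Fin 3 → ℂ), ?_⟩
    rw [map_smul, dotL_single, smul_eq_mul]; field_simp
  have h := LinearMap.finrank_range_add_finrank_ker (dotL u)
  rw [hsurj] at h
  simp at h
  omega

lemma finrank_inf_ker {u u' : Fin 3 → ℂ}
    (hind : ∀ α β : ℂ, α • u + β • u' = 0 → α = 0 ∧ β = 0) :
    Module.finrank ℂ ((LinearMap.ker (dotL u)) ⊓ (LinearMap.ker (dotL u')) :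
      Submodule ℂ (Fin 3 → ℂ)) = 1 := by
  have hu : u ≠ 0 := by
    intro hu0
    have := (hind 1 0 (by simp [hu0])).1
    norm_num at this
  have hu' : u' ≠ 0 := by
    intro hu0
    have := (hind 0 1 (by simp [hu0])).2
    norm_num at this
  set A := LinearMap.ker (dotL u)
  set B := LinearMap.ker (dotL u')
  have hAB : A ≠ B := by
    intro hEq
    obtain ⟨l, hl⟩ := ker_dotL_le hu (le_of_eq hEq)
    have := (hind (-l) 1 (by rw [hl]; module)).2
    norm_num at this
  have hrA : Module.finrank ℂ A = 2 := finrank_ker_dotL hu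
  have hrB : Module.finrank ℂ B = 2 := finrank_ker_dotL hu'
  have hlt : A < A ⊔ B := by
    refine lt_of_le_of_ne le_sup_left ?_
    intro hEq
    have hBA : B ≤ A := hEq ▸ le_sup_right
    exact hAB ((Submodule.eq_of_le_of_finrank_le hBA (by omega)).symm)
  have h3 : Module.finrank ℂ (A ⊔ B : Submodule ℂ (Fin 3 → ℂ)) = 3 := by
    have h1 := Submodule.finrank_lt_finrank_of_lt hlt
    have h2 := Submodule.finrank_le (A ⊔ B : Submodule ℂ (Fin 3 → ℂ))
    simp only [Module.finrank_fin_fun] at h2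
    omega
  have := Submodule.finrank_sup_add_finrank_inf_eq A B
  omega

lemma hyperplane {a e b d : Fin 3 → ℂ} (ha : a ≠ 0)
    (h : toPoly a * toPoly e = toPoly b * toPoly d) :
    (∃ l : ℂ, b = l • a) ∨ (∃ l : ℂ, d = l • a) := by
  have hpt : ∀ w : Fin 3 → ℂ, (dotL a w) * (dotL e w) = (dotL b w) * (dotL d w) := by
    intro w
    have := congrArg (eval w) h
    rw [map_mul, map_mul, eval_toPoly, eval_toPoly, eval_toPoly, eval_toPoly] at this
    simpa [dotL_apply] using this
  have hsub : LinearMap.ker (dotL a) ≤ LinearMap.ker (dotL b) ∨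
      LinearMap.ker (dotL a) ≤ LinearMap.ker (dotL d) := by
    apply sub_union
    intro x hx
    simp only [LinearMap.mem_ker] at hx ⊢
    have := hpt x
    rw [hx, zero_mul] at this
    rcases mul_eq_zero.mp this.symm with h1 | h1
    · exact Or.inl h1
    · exact Or.inr h1
  rcases hsub with h1 | h1
  · exact Or.inl (ker_dotL_le ha h1)
  · exact Or.inr (ker_dotL_le ha h1)

lemma toPoly_zero : toPoly (0 : Fin 3 → ℂ) = 0 := by simp [toPoly]

lemma dichotomy {A B D E : Fin 3 → ℂ}
    (hprod : toPoly A * toPoly E = toPoly B * toPoly D) :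
    (∃ v : Fin 2 → ℂ, v ≠ 0 ∧ v 0 • A + v 1 • D = 0 ∧ v 0 • B + v 1 • E = 0) ∨
    (∃ α β : ℂ, ¬(α = 0 ∧ β = 0) ∧ α • A + β • B = 0 ∧ α • D + β • E = 0) := by
  by_cases hA : A = 0
  · subst hA
    rw [toPoly_zero, zero_mul] at hprod
    rcases mul_eq_zero.mp hprod.symm with h1 | h1
    · left
      refine ⟨![1, 0], ?_, ?_, ?_⟩
      · intro hv; have := congrFun hv 0; norm_num at this
      · simp
      · rw [toPoly_eq_zero h1]; simp
    · right
      refine ⟨1, 0, by norm_num, by simp, ?_⟩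
      rw [toPoly_eq_zero h1]; simp
  · rcases hyperplane hA hprod with ⟨l, hl⟩ | ⟨l, hl⟩
    · -- B = l • A, deduce E = l • D
      have hE : toPoly E = C l * toPoly D := by
        have : toPoly A * toPoly E = toPoly A * (C l * toPoly D) := by
          rw [hprod, hl, toPoly_smul]; ring
        exact mul_left_cancel₀ (toPoly_ne_zero hA) this
      have hED : E = l • D := by
        have : toPoly (E - l • D) = 0 := by
          have hsub : toPoly (E - l • D) = toPoly E - toPoly (l • D) := by
            have := toPoly_add (E - l • D) (l • D)
            simp at this
            rw [this]; ring
          rw [hsub, hE, toPoly_smul]; ring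
        have := toPoly_eq_zero this
        have := sub_eq_zero.mp this
        exact this
      right
      refine ⟨l, -1, by norm_num, ?_, ?_⟩
      · rw [hl]; module
      · rw [hED]; module
    · -- D = l • A, deduce E = l • B
      have hE : toPoly E = C l * toPoly B := by
        have : toPoly A * toPoly E = toPoly A * (C l * toPoly B) := by
          rw [hprod, hl, toPoly_smul]; ring
        exact mul_left_cancel₀ (toPoly_ne_zero hA) this
      have hEB : E = l • B := by
        have : toPoly (E - l • B) = 0 := by
          have hsub : toPoly (E - l • B) = toPoly E - toPoly (l • B) := by
            have := toPoly_add (E - l • B) (l • B)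
            simp at this
            rw [this]; ring
          rw [hsub, hE, toPoly_smul]; ring
        exact sub_eq_zero.mp (toPoly_eq_zero this)
      left
      refine ⟨![l, -1], ?_, ?_, ?_⟩
      · intro hv; have := congrFun hv 1; norm_num at this
      · simp only [Matrix.cons_val_zero, Matrix.cons_val_one, Matrix.head_cons]
        rw [hl]; module
      · simp only [Matrix.cons_val_zero, Matrix.cons_val_one, Matrix.head_cons]
        rw [hEB]; module

def colc (r : Matrix (Fin 2) (Fin 3) (Fin 3 → ℂ)) (u : Fin 3 → ℂ) (i : Fin 2) :
    Fin 3 → ℂ := fun k => ∑ l, u l * r i l k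

lemma repOf_apply (r : Matrix (Fin 2) (Fin 3) (Fin 3 → ℂ)) (k : Fin 3) (v : Fin 2 → ℂ)
    (j : Fin 3) : repOf r k v j = v 0 * r 0 j k + v 1 * r 1 j k := by
  simp [repOf, Fin.sum_univ_two]

lemma dotL_repOf (r : Matrix (Fin 2) (Fin 3) (Fin 3 → ℂ)) (u : Fin 3 → ℂ) (k : Fin 3)
    (v : Fin 2 → ℂ) :
    dotL u (repOf r k v) = v 0 * colc r u 0 k + v 1 * colc r u 1 k := by
  rw [dotL_apply]
  simp only [repOf_apply, colc, Finset.mul_sum]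
  rw [← Finset.sum_add_distrib]
  congr 1; funext l; ring

lemma destab (r : Matrix (Fin 2) (Fin 3) (Fin 3 → ℂ)) (u u' : Fin 3 → ℂ)
    (hind : ∀ α β : ℂ, α • u + β • u' = 0 → α = 0 ∧ β = 0)
    (hprod : toPoly (colc r u 0) * toPoly (colc r u' 1)
      = toPoly (colc r u' 0) * toPoly (colc r u 1)) :
    ¬ KStable (repOf r) := by
  intro hst
  have hu : u ≠ 0 := by
    intro hu0; have := (hind 1 0 (by simp [hu0])).1; norm_num at this
  rcases dichotomy hprod with ⟨v, hv, hAD, hBE⟩ | ⟨α, β, hne, hAB, hDE⟩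
  · -- U₁ = span v, U₂ = ker u ⊓ ker u'
    set U₂ : Submodule ℂ (Fin 3 → ℂ) :=
      LinearMap.ker (dotL u) ⊓ LinearMap.ker (dotL u') with hU₂
    have hmem : ∀ k, repOf r k v ∈ U₂ := by
      intro k
      rw [hU₂, Submodule.mem_inf]
      constructor <;> rw [LinearMap.mem_ker, dotL_repOf]
      · have h0 := congrFun hAD k
        simpa using h0
      · have h0 := congrFun hBE k
        simpa using h0
    have hmap : ∀ k, (Submodule.span ℂ {v}).map (repOf r k) ≤ U₂ := by
      intro k
      rw [Submodule.map_span, Submodule.span_le]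
      rintro x ⟨y, hy, rfl⟩
      rcases hy with rfl
      exact hmem k
    have hlt := hst (Submodule.span ℂ {v}) U₂ hmap
      (fun hc => hv (Submodule.span_singleton_eq_bot.mp hc.1))
      (by
        rintro ⟨-, h2⟩
        have : LinearMap.ker (dotL u) = ⊤ :=
          top_le_iff.mp (le_trans (le_of_eq h2.symm) inf_le_left)
        exact hu (dotL_eq_zero (LinearMap.ker_eq_top.mp this)))
    rw [finrank_span_singleton hv, finrank_inf_ker hind] at hlt
    omega
  · -- U₁ = ⊤, U₂ = ker (dotL (α•u+β•u'))
    set f : Fin 3 → ℂ := α • u + β • u' with hf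
    have hfne : f ≠ 0 := fun h0 => hne (hind α β h0)
    have hcol : ∀ i, colc r f i = 0 := by
      intro i
      funext k
      have : colc r f i k = α * colc r u i k + β * colc r u' i k := by
        simp only [colc, hf, Finset.mul_sum, ← Finset.sum_add_distrib]
        congr 1; funext l
        simp [Pi.add_apply, Pi.smul_apply]; ring
      rw [this]
      fin_cases i
      · have h0 := congrFun hAB k; simpa using h0
      · have h0 := congrFun hDE k; simpa using h0
    have hmem : ∀ k v', repOf r k v' ∈ LinearMap.ker (dotL f) := by
      intro k v'
      rw [LinearMap.mem_ker, dotL_repOf, hcol 0, hcol 1]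
      simp
    have hmap : ∀ k, (⊤ : Submodule ℂ (Fin 2 → ℂ)).map (repOf r k) ≤
        LinearMap.ker (dotL f) := by
      intro k
      rintro x ⟨y, -, rfl⟩
      exact hmem k y
    have hlt := hst ⊤ (LinearMap.ker (dotL f)) hmap
      (by rintro ⟨h1, -⟩; exact absurd h1.symm bot_ne_top)
      (by rintro ⟨-, h2⟩; exact hfne (dotL_eq_zero (LinearMap.ker_eq_top.mp h2)))
    rw [finrank_top, Module.finrank_fin_fun, finrank_ker_dotL hfne] at hlt
    omega

lemma minor_zero (r : Matrix (Fin 2) (Fin 3) (Fin 3 → ℂ)) :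
    minor r 0 = toPoly (r 0 1) * toPoly (r 1 2) - toPoly (r 0 2) * toPoly (r 1 1) := rfl

lemma minor_one (r : Matrix (Fin 2) (Fin 3) (Fin 3 → ℂ)) :
    minor r 1 = toPoly (r 0 2) * toPoly (r 1 0) - toPoly (r 0 0) * toPoly (r 1 2) := rfl

lemma minor_two (r : Matrix (Fin 2) (Fin 3) (Fin 3 → ℂ)) :
    minor r 2 = toPoly (r 0 0) * toPoly (r 1 1) - toPoly (r 0 1) * toPoly (r 1 0) := rfl

lemma toPoly_colc (r : Matrix (Fin 2) (Fin 3) (Fin 3 → ℂ)) (u : Fin 3 → ℂ) (i : Fin 2) :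
    toPoly (colc r u i) = ∑ l, C (u l) * toPoly (r i l) := by
  simp only [toPoly, colc, Finset.mul_sum, map_sum, map_mul]
  rw [Finset.sum_comm]
  simp [Finset.sum_mul, mul_assoc]

lemma rel_destab (r : Matrix (Fin 2) (Fin 3) (Fin 3 → ℂ)) (c : Fin 3 → ℂ) (hc : c ≠ 0)
    (hrel : ∑ k, c k • minor r k = 0) : ¬ KStable (repOf r) := by
  rw [Fin.sum_univ_three, smul_eq_C_mul, smul_eq_C_mul, smul_eq_C_mul,
    minor_zero, minor_one, minor_two] at hrel
  obtain ⟨k, hk⟩ : ∃ k, c k ≠ 0 := by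
    by_contra hcc; push_neg at hcc; exact hc (funext fun k => hcc k)
  fin_cases k
  · -- c 0 ≠ 0 : u = ![-c 1, c 0, 0], u' = ![-c 2, 0, c 0]
    apply destab r ![-c 1, c 0, 0] ![-c 2, 0, c 0]
    · intro α β h
      have h1 := congrFun h 1
      have h2 := congrFun h 2
      simp at h1 h2
      constructor
      · rcases h1 with h1 | h1; exact h1; exact absurd h1 hk
      · rcases h2 with h2 | h2; exact h2; exact absurd h2 hk
    · rw [toPoly_colc, toPoly_colc, toPoly_colc, toPoly_colc,
        Fin.sum_univ_three, Fin.sum_univ_three, Fin.sum_univ_three, Fin.sum_univ_three]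
      simp only [Matrix.cons_val_zero, Matrix.cons_val_one, Matrix.head_cons,
        Matrix.cons_val_two, Matrix.tail_cons, map_neg, map_zero]
      linear_combination (C (c 0)) * hrel
  · -- c 1 ≠ 0 : u = ![c 1, -c 0, 0], u' = ![0, -c 2, c 1]
    apply destab r ![c 1, -c 0, 0] ![0, -c 2, c 1]
    · intro α β h
      have h1 := congrFun h 0
      have h2 := congrFun h 2
      simp at h1 h2
      constructor
      · rcases h1 with h1 | h1; exact h1; exact absurd h1 hk
      · rcases h2 with h2 | h2; exact h2; exact absurd h2 hk
    · rw [toPoly_colc, toPoly_colc, toPoly_colc, toPoly_colc,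
        Fin.sum_univ_three, Fin.sum_univ_three, Fin.sum_univ_three, Fin.sum_univ_three]
      simp only [Matrix.cons_val_zero, Matrix.cons_val_one, Matrix.head_cons,
        Matrix.cons_val_two, Matrix.tail_cons, map_neg, map_zero]
      linear_combination (-(C (c 1))) * hrel
  · -- c 2 ≠ 0 : u = ![c 2, 0, -c 0], u' = ![0, c 2, -c 1]
    apply destab r ![c 2, 0, -c 0] ![0, c 2, -c 1]
    · intro α β h
      have h1 := congrFun h 0
      have h2 := congrFun h 1
      simp at h1 h2
      constructor
      · rcases h1 with h1 | h1; exact h1; exact absurd h1 hk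
      · rcases h2 with h2 | h2; exact h2; exact absurd h2 hk
    · rw [toPoly_colc, toPoly_colc, toPoly_colc, toPoly_colc,
        Fin.sum_univ_three, Fin.sum_univ_three, Fin.sum_univ_three, Fin.sum_univ_three]
      simp only [Matrix.cons_val_zero, Matrix.cons_val_one, Matrix.head_cons,
        Matrix.cons_val_two, Matrix.tail_cons, map_neg, map_zero]
      linear_combination (C (c 2)) * hrel

lemma tensor_extract {x y : Fin 3 → Pxyz} (hli : LinearIndependent ℂ y)
    (hT : ∑ k, x k ⊗ₜ[ℂ] y k = (0 : Pxyz ⊗[ℂ] Pxyz)) : ∀ j, x j = 0 := by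
  intro j
  obtain ⟨q, hq⟩ := Submodule.exists_isCompl (Submodule.span ℂ (Set.range y))
  set pr := Submodule.projectionOnto _ q hq with hprdef
  set f : Pxyz →ₗ[ℂ] ℂ := (Module.Basis.span hli).coord j ∘ₗ pr with hfdef
  have hf : ∀ k, f (y k) = if k = j then 1 else 0 := by
    intro k
    have hmem : y k ∈ Submodule.span ℂ (Set.range y) := Submodule.subset_span ⟨k, rfl⟩
    have hpr : pr (y k) = ⟨y k, hmem⟩ := by
      have := Submodule.linearProjOfIsCompl_apply_left hq ⟨y k, hmem⟩
      simpa using this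
    rw [hfdef, LinearMap.comp_apply, hpr]
    have hspan : (⟨y k, hmem⟩ : Submodule.span ℂ (Set.range y)) = Module.Basis.span hli k := by
      ext; rw [Module.Basis.span_apply]
    rw [hspan, Module.Basis.coord_apply, Module.Basis.repr_self]
    simp [Finsupp.single_apply]
  set F : Pxyz ⊗[ℂ] Pxyz →ₗ[ℂ] Pxyz :=
    (TensorProduct.rid ℂ Pxyz).toLinearMap ∘ₗ LinearMap.lTensor Pxyz f with hFdef
  have h0 := congrArg F hT
  rw [map_zero, map_sum] at h0
  have hFt : ∀ k, F (x k ⊗ₜ[ℂ] y k) = f (y k) • x k := by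
    intro k
    rw [hFdef]
    simp [LinearMap.lTensor_tmul]
  rw [Finset.sum_congr rfl (fun k _ => hFt k)] at h0
  have hxj : ∑ k, f (y k) • x k = x j := by
    rw [Finset.sum_congr rfl (fun k _ => by rw [hf k])]
    simp [ite_smul]
  rw [← hxj, h0]

lemma syz1_eq (r : Matrix (Fin 2) (Fin 3) (Fin 3 → ℂ)) :
    syz1 r = ∑ k, toPoly (r 0 k) ⊗ₜ[ℂ] minor r k := by
  rw [Fin.sum_univ_three, minor_zero, minor_one, minor_two]
  simp only [syz1, TensorProduct.tmul_sub]
  abel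

lemma syz2_eq (r : Matrix (Fin 2) (Fin 3) (Fin 3 → ℂ)) :
    syz2 r = ∑ k, toPoly (r 1 k) ⊗ₜ[ℂ] minor r k := by
  rw [Fin.sum_univ_three, minor_zero, minor_one, minor_two]
  simp only [syz2, TensorProduct.tmul_sub]
  abel

lemma combo (r : Matrix (Fin 2) (Fin 3) (Fin 3 → ℂ)) (a b : ℂ) :
    a • syz1 r + b • syz2 r
      = ∑ k, toPoly (a • r 0 k + b • r 1 k) ⊗ₜ[ℂ] minor r k := by
  rw [syz1_eq, syz2_eq, Finset.smul_sum, Finset.smul_sum, ← Finset.sum_add_distrib]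
  congr 1; funext k
  rw [toPoly_add, toPoly_smul, toPoly_smul, TensorProduct.add_tmul,
    TensorProduct.smul_tmul', TensorProduct.smul_tmul', smul_eq_C_mul, smul_eq_C_mul]

/-- If the 2×3 matrix `r = (A B C; D E F)` with entries in `W` determines a
stable representation of the 3-Kronecker quiver of dimension vector `(2,3)`, then the two
tensors `Syz¹_r` and `Syz²_r` are linearly independent in `W ⊗ S²W`. -/
theorem stmt3 (r : Matrix (Fin 2) (Fin 3) (Fin 3 → ℂ)) (h : KStable (repOf r)) :
    LinearIndependent ℂ ![syz1 r, syz2 r] := by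
  rw [LinearIndependent.pair_iff]
  intro a b hab
  by_contra hne
  have hT : ∑ k, toPoly (a • r 0 k + b • r 1 k) ⊗ₜ[ℂ] minor r k = 0 := by
    rw [← combo r a b]; exact hab
  by_cases hli : LinearIndependent ℂ (minor r)
  · have hz : ∀ j, (a • r 0 j + b • r 1 j : Fin 3 → ℂ) = 0 :=
      fun j => toPoly_eq_zero (tensor_extract hli hT j)
    have hv : (![a, b] : Fin 2 → ℂ) ≠ 0 := by
      intro h0
      exact hne ⟨by simpa using congrFun h0 0, by simpa using congrFun h0 1⟩
    have hrep : ∀ k, repOf r k ![a, b] = 0 := by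
      intro k
      funext j
      rw [repOf_apply]
      have := congrFun (hz j) k
      simpa using this
    have hmap : ∀ k, (Submodule.span ℂ {![a, b]}).map (repOf r k)
        ≤ (⊥ : Submodule ℂ (Fin 3 → ℂ)) := by
      intro k
      rw [Submodule.map_span, Submodule.span_le]
      rintro x ⟨y, hy, rfl⟩
      rcases hy with rfl
      simp [hrep k]
    have hlt := h (Submodule.span ℂ {![a, b]}) ⊥ hmap
      (fun hc => hv (Submodule.span_singleton_eq_bot.mp hc.1))
      (by rintro ⟨-, h2⟩; exact absurd h2 bot_ne_top)
    rw [finrank_bot] at hlt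
    omega
  · obtain ⟨c, hsum, jj, hjj⟩ := Fintype.not_linearIndependent_iff.mp hli
    exact rel_destab r c (fun h0 => hjj (by rw [h0]; rfl)) hsum h
end
end

section
/- Let (a,b,c) ∈ ℂ³ and let r be the 2×3 matrix with rows (x, y, z) and (ay, bz, cx), whose entries are linear forms in ℂ[x,y,z]. The representation of the 3-Kronecker quiver of dimension vector (2,3) determined by r is stable if and only if at least two of a, b, c are nonzero. -/
open MvPolynomial TensorProduct

noncomputable section

/-! ### Auxiliary material for the proof of `stmt10` -/


def Mabc (a b c : ℂ) : Matrix (Fin 2) (Fin 3) (Fin 3 → ℂ) :=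
  Matrix.of ![![Pi.single (0 : Fin 3) (1 : ℂ), Pi.single (1 : Fin 3) (1 : ℂ),
            Pi.single (2 : Fin 3) (1 : ℂ)],
          ![Pi.single (1 : Fin 3) a, Pi.single (2 : Fin 3) b, Pi.single (0 : Fin 3) c]]

lemma rep0 (a b c : ℂ) (v : Fin 2 → ℂ) :
    repOf (Mabc a b c) 0 v = ![v 0, 0, c * v 1] := by
  funext j
  fin_cases j <;>
    simp [repOf, Mabc, Fin.sum_univ_two, Matrix.of_apply, Pi.single_apply, mul_comm,
      Matrix.vecHead, Matrix.vecTail]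

lemma rep1 (a b c : ℂ) (v : Fin 2 → ℂ) :
    repOf (Mabc a b c) 1 v = ![a * v 1, v 0, 0] := by
  funext j
  fin_cases j <;>
    simp [repOf, Mabc, Fin.sum_univ_two, Matrix.of_apply, Pi.single_apply, mul_comm,
      Matrix.vecHead, Matrix.vecTail]

lemma rep2 (a b c : ℂ) (v : Fin 2 → ℂ) :
    repOf (Mabc a b c) 2 v = ![0, b * v 1, v 0] := by
  funext j
  fin_cases j <;>
    simp [repOf, Mabc, Fin.sum_univ_two, Matrix.of_apply, Pi.single_apply, mul_comm,
      Matrix.vecHead, Matrix.vecTail]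

lemma indep_aux (x y : Fin 3 → ℂ) (i j : Fin 3)
    (hxi : x i = 0) (hyi : y i ≠ 0) (hxj : x j ≠ 0) :
    LinearIndependent ℂ ![x, y] := by
  rw [LinearIndependent.pair_iff]
  intro s t hst
  have h1 := congrFun hst i
  have h2 := congrFun hst j
  simp only [Pi.add_apply, Pi.smul_apply, smul_eq_mul, Pi.zero_apply] at h1 h2
  rw [hxi, mul_zero, zero_add] at h1
  have ht : t = 0 := (mul_eq_zero.mp h1).resolve_right hyi
  subst ht
  rw [zero_mul, add_zero] at h2
  exact ⟨(mul_eq_zero.mp h2).resolve_right hxj, rfl⟩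

lemma two_le_finrank (U : Submodule ℂ (Fin 3 → ℂ)) (x y : Fin 3 → ℂ)
    (hx : x ∈ U) (hy : y ∈ U) (h : LinearIndependent ℂ ![x, y]) :
    2 ≤ Module.finrank ℂ U := by
  have hle : Submodule.span ℂ (Set.range ![x, y]) ≤ U := by
    rw [Submodule.span_le]
    rintro z ⟨i, rfl⟩
    fin_cases i
    · exact hx
    · exact hy
  calc (2 : ℕ) = Module.finrank ℂ (Submodule.span ℂ (Set.range ![x, y])) := by
        rw [finrank_span_eq_card h]; simp
    _ ≤ Module.finrank ℂ U := Submodule.finrank_mono hle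

lemma not_stable_aux (ρ : Fin 3 → ((Fin 2 → ℂ) →ₗ[ℂ] (Fin 3 → ℂ)))
    (v : Fin 2 → ℂ) (w : Fin 3 → ℂ) (hv : v ≠ 0) (hw : w ≠ 0)
    (hmem : ∀ k, ρ k v ∈ Submodule.span ℂ {w}) : ¬ KStable ρ := by
  intro hS
  have h := hS (Submodule.span ℂ {v}) (Submodule.span ℂ {w}) ?_ ?_ ?_
  · rw [finrank_span_singleton hv, finrank_span_singleton hw] at h
    omega
  · intro k
    rw [Submodule.map_span, Set.image_singleton, Submodule.span_le,
      Set.singleton_subset_iff]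
    exact hmem k
  · rintro ⟨h1, -⟩
    exact hv (Submodule.span_singleton_eq_bot.mp h1)
  · rintro ⟨-, h2⟩
    have := finrank_span_singleton (K := ℂ) hw
    rw [h2, finrank_top, Module.finrank_fin_fun] at this
    omega

/-- Let `(a,b,c) ∈ ℂ³` and let `r` be the 2×3 matrix with rows `(x, y, z)`
and `(ay, bz, cx)`.  The representation of the 3-Kronecker quiver of dimension vector `(2,3)`
determined by `r` is stable if and only if at least two of `a, b, c` are nonzero. -/
theorem stmt10 (a b c : ℂ) :
    KStable (repOf (Matrix.of
        ![![Pi.single (0 : Fin 3) (1 : ℂ), Pi.single (1 : Fin 3) (1 : ℂ),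
            Pi.single (2 : Fin 3) (1 : ℂ)],
          ![Pi.single (1 : Fin 3) a, Pi.single (2 : Fin 3) b, Pi.single (0 : Fin 3) c]])) ↔
      ((a ≠ 0 ∧ b ≠ 0) ∨ (a ≠ 0 ∧ c ≠ 0) ∨ (b ≠ 0 ∧ c ≠ 0)) := by
  show KStable (repOf (Mabc a b c)) ↔ _
  constructor
  · intro hS
    by_contra hn
    have h2 : (b = 0 ∧ c = 0) ∨ (a = 0 ∧ c = 0) ∨ (a = 0 ∧ b = 0) := by
      by_cases ha : a = 0 <;> by_cases hb : b = 0 <;> by_cases hc : c = 0 <;> tauto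
    have hv : (![0, 1] : Fin 2 → ℂ) ≠ 0 := by
      intro h
      have := congrFun h 1
      simp at this
    rcases h2 with ⟨hb, hc⟩ | ⟨ha, hc⟩ | ⟨ha, hb⟩
    · refine not_stable_aux _ ![0, 1] (Pi.single 0 1) hv ?_ ?_ hS
      · intro h
        have := congrFun h 0
        simp at this
      · intro k
        fin_cases k
        · show repOf (Mabc a b c) 0 ![0,1] ∈ _
          rw [rep0]
          simp only [hc, zero_mul]
          convert Submodule.zero_mem _ using 1
          funext j; fin_cases j <;> simp
        · show repOf (Mabc a b c) 1 ![0,1] ∈ _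
          rw [rep1]
          refine Submodule.mem_span_singleton.mpr ⟨a, ?_⟩
          funext j; fin_cases j <;> simp [Pi.single_apply]
        · show repOf (Mabc a b c) 2 ![0,1] ∈ _
          rw [rep2]
          simp only [hb, zero_mul]
          convert Submodule.zero_mem _ using 1
          funext j; fin_cases j <;> simp
    · refine not_stable_aux _ ![0, 1] (Pi.single 1 1) hv ?_ ?_ hS
      · intro h
        have := congrFun h 1
        simp at this
      · intro k
        fin_cases k
        · show repOf (Mabc a b c) 0 ![0,1] ∈ _
          rw [rep0]
          simp only [hc, zero_mul]
          convert Submodule.zero_mem _ using 1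
          funext j; fin_cases j <;> simp
        · show repOf (Mabc a b c) 1 ![0,1] ∈ _
          rw [rep1]
          simp only [ha, zero_mul]
          convert Submodule.zero_mem _ using 1
          funext j; fin_cases j <;> simp
        · show repOf (Mabc a b c) 2 ![0,1] ∈ _
          rw [rep2]
          refine Submodule.mem_span_singleton.mpr ⟨b, ?_⟩
          funext j; fin_cases j <;> simp [Pi.single_apply]
    · refine not_stable_aux _ ![0, 1] (Pi.single 2 1) hv ?_ ?_ hS
      · intro h
        have := congrFun h 2
        simp at this
      · intro k
        fin_cases k
        · show repOf (Mabc a b c) 0 ![0,1] ∈ _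
          rw [rep0]
          refine Submodule.mem_span_singleton.mpr ⟨c, ?_⟩
          funext j; fin_cases j <;> simp [Pi.single_apply]
        · show repOf (Mabc a b c) 1 ![0,1] ∈ _
          rw [rep1]
          simp only [ha, zero_mul]
          convert Submodule.zero_mem _ using 1
          funext j; fin_cases j <;> simp
        · show repOf (Mabc a b c) 2 ![0,1] ∈ _
          rw [rep2]
          simp only [hb, zero_mul]
          convert Submodule.zero_mem _ using 1
          funext j; fin_cases j <;> simp
  · intro habc U₁ U₂ hmap hbot htop
    have hle2 : Module.finrank ℂ U₁ ≤ 2 := by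
      have h := Submodule.finrank_le U₁
      rwa [Module.finrank_fin_fun] at h
    have hcases : Module.finrank ℂ U₁ = 0 ∨ Module.finrank ℂ U₁ = 1 ∨
        Module.finrank ℂ U₁ = 2 := by omega
    rcases hcases with h0 | h1 | h2top
    · have hU1 : U₁ = ⊥ := Submodule.finrank_eq_zero.mp h0
      have hU2 : U₂ ≠ ⊥ := fun h => hbot ⟨hU1, h⟩
      have : Module.finrank ℂ U₂ ≠ 0 := fun h => hU2 (Submodule.finrank_eq_zero.mp h)
      omega
    · have hU1ne : U₁ ≠ ⊥ := by
        intro h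
        rw [h, finrank_bot] at h1
        omega
      obtain ⟨v, hvU, hvne⟩ := Submodule.ne_bot_iff U₁ |>.mp hU1ne
      have hmem : ∀ k, repOf (Mabc a b c) k v ∈ U₂ := fun k => hmap k ⟨v, hvU, rfl⟩
      have key : 2 ≤ Module.finrank ℂ U₂ := by
        by_cases hv0 : v 0 = 0
        · have hv1 : v 1 ≠ 0 := by
            intro hv1
            apply hvne
            funext i; fin_cases i <;> simpa
          rcases habc with ⟨ha, hb⟩ | ⟨ha, hc⟩ | ⟨hb, hc⟩
          · refine two_le_finrank U₂ _ _ (hmem 1) (hmem 2) ?_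
            rw [rep1, rep2]
            exact indep_aux _ _ 1 0 (by simp [hv0]) (by simp [hb, hv1]) (by simp [ha, hv1])
          · refine two_le_finrank U₂ _ _ (hmem 1) (hmem 0) ?_
            rw [rep1, rep0]
            exact indep_aux _ _ 2 0 (by simp) (by simp [hc, hv1]) (by simp [ha, hv1])
          · refine two_le_finrank U₂ _ _ (hmem 2) (hmem 0) ?_
            rw [rep2, rep0]
            exact indep_aux _ _ 2 1 (by simp [hv0]) (by simp [hc, hv1]) (by simp [hb, hv1])
        · refine two_le_finrank U₂ _ _ (hmem 0) (hmem 1) ?_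
          rw [rep0, rep1]
          exact indep_aux _ _ 1 0 (by simp) (by simp [hv0]) (by simp [hv0])
      omega
    · exfalso
      have hU1 : U₁ = ⊤ := by
        apply Submodule.eq_top_of_finrank_eq
        rw [h2top, Module.finrank_fin_fun]
      have hsingle : ∀ j : Fin 3, Pi.single j (1:ℂ) ∈ U₂ := by
        intro j
        fin_cases j
        · have := hmap 0 ⟨![1, 0], by rw [hU1]; trivial, rfl⟩
          rwa [show repOf (Mabc a b c) 0 ![1,0] = Pi.single (0 : Fin 3) (1:ℂ) by
            rw [rep0]; funext j; fin_cases j <;> simp [Pi.single_apply]] at this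
        · have := hmap 1 ⟨![1, 0], by rw [hU1]; trivial, rfl⟩
          rwa [show repOf (Mabc a b c) 1 ![1,0] = Pi.single (1 : Fin 3) (1:ℂ) by
            rw [rep1]; funext j; fin_cases j <;> simp [Pi.single_apply]] at this
        · have := hmap 2 ⟨![1, 0], by rw [hU1]; trivial, rfl⟩
          rwa [show repOf (Mabc a b c) 2 ![1,0] = Pi.single (2 : Fin 3) (1:ℂ) by
            rw [rep2]; funext j; fin_cases j <;> simp [Pi.single_apply]] at this
      have hU2 : U₂ = ⊤ := by
        rw [eq_top_iff]
        intro w _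
        have hw : w = ∑ j : Fin 3, w j • (Pi.single j 1 : Fin 3 → ℂ) := by
          funext j'
          simp [Finset.sum_apply, Pi.single_apply]
        rw [hw]
        exact Submodule.sum_mem _ fun j _ => Submodule.smul_mem _ _ (hsingle j)
      exact htop ⟨hU1, hU2⟩
end
end

section
/- The ℂ-linear span of the set { p ⊗ q : r is a 2×3 matrix with entries in W determining a stable representation, and p, q ∈ H_r } is the whole space S²W ⊗ S²W. -/
open MvPolynomial TensorProduct

noncomputable section

-- AUX START
namespace Stmt12Aux

abbrev wx : Fin 3 → ℂ := ![1, 0, 0]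
abbrev wy : Fin 3 → ℂ := ![0, 1, 0]
abbrev wz : Fin 3 → ℂ := ![0, 0, 1]
abbrev w0 : Fin 3 → ℂ := ![0, 0, 0]

def rA : Matrix (Fin 2) (Fin 3) (Fin 3 → ℂ) := Matrix.of ![![wx, w0, wz], ![w0, wy, wz]]
def rB : Matrix (Fin 2) (Fin 3) (Fin 3 → ℂ) := Matrix.of ![![wx, wy, w0], ![w0, wx, wy]]
def rC : Matrix (Fin 2) (Fin 3) (Fin 3 → ℂ) := Matrix.of ![![wy, wz, w0], ![w0, wy, wz]]
def rD : Matrix (Fin 2) (Fin 3) (Fin 3 → ℂ) := Matrix.of ![![wx, wz, w0], ![w0, wx, wz]]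
def rE : Matrix (Fin 2) (Fin 3) (Fin 3 → ℂ) := Matrix.of ![![wx, wz, w0], ![w0, wx, wy]]
def rF : Matrix (Fin 2) (Fin 3) (Fin 3 → ℂ) := Matrix.of ![![wy, wx, w0], ![w0, wy, wz]]
def rG : Matrix (Fin 2) (Fin 3) (Fin 3 → ℂ) := Matrix.of ![![wz, wy, w0], ![w0, wz, wx]]

lemma repOf_apply (r : Matrix (Fin 2) (Fin 3) (Fin 3 → ℂ)) (k : Fin 3) (v : Fin 2 → ℂ) (j : Fin 3) :
    repOf r k v j = v 0 * r 0 j k + v 1 * r 1 j k := by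
  simp [repOf, Fin.sum_univ_two]

lemma li_of_det {a b : Fin 3 → ℂ} (j j' : Fin 3)
    (h : a j * b j' - a j' * b j ≠ 0) : LinearIndependent ℂ ![a, b] := by
  rw [LinearIndependent.pair_iff]
  intro s t hst
  have h1 : s * a j + t * b j = 0 := by simpa using congrFun hst j
  have h2 : s * a j' + t * b j' = 0 := by simpa using congrFun hst j'
  have hs : s * (a j * b j' - a j' * b j) = 0 := by linear_combination b j' * h1 - b j * h2
  have ht : t * (a j * b j' - a j' * b j) = 0 := by linear_combination a j * h2 - a j' * h1
  exact ⟨(mul_eq_zero.1 hs).resolve_right h, (mul_eq_zero.1 ht).resolve_right h⟩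

lemma vec_cases {v : Fin 2 → ℂ} (hv : v ≠ 0) : v 0 ≠ 0 ∨ (v 0 = 0 ∧ v 1 ≠ 0) := by
  by_cases h0 : v 0 = 0
  · refine Or.inr ⟨h0, fun h1 => hv (funext fun i => ?_)⟩
    fin_cases i <;> simp [h0, h1]
  · exact Or.inl h0

lemma two_le_finrank_of (U : Submodule ℂ (Fin 3 → ℂ)) {a b : Fin 3 → ℂ}
    (ha : a ∈ U) (hb : b ∈ U) (h : LinearIndependent ℂ ![a, b]) :
    2 ≤ Module.finrank ℂ U := by
  have hle : Submodule.span ℂ (Set.range ![a, b]) ≤ U := by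
    rw [Submodule.span_le]
    rintro x ⟨i, rfl⟩
    fin_cases i <;> simpa
  have h2 := Submodule.finrank_mono hle
  rw [finrank_span_eq_card h] at h2
  simpa using h2

lemma kStable_of (ρ : Fin 3 → ((Fin 2 → ℂ) →ₗ[ℂ] (Fin 3 → ℂ)))
    (h1 : ∀ v : Fin 2 → ℂ, v ≠ 0 → ∃ k l : Fin 3, LinearIndependent ℂ ![ρ k v, ρ l v])
    (h2 : ∀ j : Fin 3, ∃ k v, ρ k v = (fun j' => if j = j' then (1 : ℂ) else 0)) :
    KStable ρ := by
  intro U₁ U₂ hmap hb ht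
  have himg : ∀ (k : Fin 3) (v : Fin 2 → ℂ), v ∈ U₁ → ρ k v ∈ U₂ := fun k v hv =>
    hmap k ⟨v, hv, rfl⟩
  by_cases hU1t : U₁ = ⊤
  · exfalso
    refine ht ⟨hU1t, ?_⟩
    rw [eq_top_iff]
    intro w _
    rw [pi_eq_sum_univ w]
    refine Submodule.sum_mem _ fun j _ => Submodule.smul_mem _ _ ?_
    obtain ⟨k, v, hv⟩ := h2 j
    have := himg k v (hU1t ▸ Submodule.mem_top)
    rwa [hv] at this
  by_cases hU1b : U₁ = ⊥
  · subst hU1b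
    have hU2 : U₂ ≠ ⊥ := fun h => hb ⟨rfl, h⟩
    have hpos : Module.finrank ℂ U₂ ≠ 0 := fun h => hU2 (Submodule.finrank_eq_zero.mp h)
    rw [finrank_bot]
    omega
  · obtain ⟨v, hvU, hv0⟩ := (Submodule.ne_bot_iff U₁).mp hU1b
    obtain ⟨k, l, hli⟩ := h1 v hv0
    have h2le := two_le_finrank_of U₂ (himg k v hvU) (himg l v hvU) hli
    have hr1 : Module.finrank ℂ U₁ = 1 := by
      have hle2 : Module.finrank ℂ U₁ ≤ 2 := by
        simpa using Submodule.finrank_le U₁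
      have hne0 : Module.finrank ℂ U₁ ≠ 0 := fun h => hU1b (Submodule.finrank_eq_zero.mp h)
      have hne2 : Module.finrank ℂ U₁ ≠ 2 := by
        intro h
        exact hU1t (Submodule.eq_top_of_finrank_eq (by simpa using h))
      omega
    rw [hr1]
    omega

lemma stableA : KStable (repOf rA) := by
  apply kStable_of
  · intro v hv
    rcases vec_cases hv with h0 | ⟨h0, h1⟩
    · by_cases h1 : v 1 = 0
      · refine ⟨0, 2, li_of_det 0 2 ?_⟩
        have : repOf rA 0 v 0 * repOf rA 2 v 2 - repOf rA 0 v 2 * repOf rA 2 v 0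
            = v 0 * (v 0 + v 1) := by
          simp [repOf_apply, rA] <;> ring
        rw [this, h1]
        simpa using mul_ne_zero h0 h0
      · refine ⟨0, 1, li_of_det 0 1 ?_⟩
        have : repOf rA 0 v 0 * repOf rA 1 v 1 - repOf rA 0 v 1 * repOf rA 1 v 0
            = v 0 * v 1 := by
          simp [repOf_apply, rA] <;> ring
        rw [this]
        exact mul_ne_zero h0 h1
    · refine ⟨1, 2, li_of_det 1 2 ?_⟩
      have : repOf rA 1 v 1 * repOf rA 2 v 2 - repOf rA 1 v 2 * repOf rA 2 v 1
          = v 1 * (v 0 + v 1) := by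
        simp [repOf_apply, rA] <;> ring
      rw [this, h0]
      simpa using mul_ne_zero h1 h1
  · intro j
    fin_cases j
    · exact ⟨0, ![1, 0], by funext j'; fin_cases j' <;> simp [repOf_apply, rA]⟩
    · exact ⟨1, ![0, 1], by funext j'; fin_cases j' <;> simp [repOf_apply, rA]⟩
    · exact ⟨2, ![1, 0], by funext j'; fin_cases j' <;> simp [repOf_apply, rA]⟩

lemma stableB : KStable (repOf rB) := by
  apply kStable_of
  · intro v hv
    rcases vec_cases hv with h0 | ⟨h0, h1⟩
    · refine ⟨0, 1, li_of_det 0 1 ?_⟩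
      have : repOf rB 0 v 0 * repOf rB 1 v 1 - repOf rB 0 v 1 * repOf rB 1 v 0
          = v 0 * v 0 := by
        simp [repOf_apply, rB] <;> ring
      rw [this]
      exact mul_ne_zero h0 h0
    · refine ⟨0, 1, li_of_det 1 2 ?_⟩
      have : repOf rB 0 v 1 * repOf rB 1 v 2 - repOf rB 0 v 2 * repOf rB 1 v 1
          = v 1 * v 1 := by
        simp [repOf_apply, rB] <;> ring
      rw [this]
      exact mul_ne_zero h1 h1
  · intro j
    fin_cases j
    · exact ⟨0, ![1, 0], by funext j'; fin_cases j' <;> simp [repOf_apply, rB]⟩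
    · exact ⟨0, ![0, 1], by funext j'; fin_cases j' <;> simp [repOf_apply, rB]⟩
    · exact ⟨1, ![0, 1], by funext j'; fin_cases j' <;> simp [repOf_apply, rB]⟩

lemma stableC : KStable (repOf rC) := by
  apply kStable_of
  · intro v hv
    rcases vec_cases hv with h0 | ⟨h0, h1⟩
    · refine ⟨1, 2, li_of_det 0 1 ?_⟩
      have : repOf rC 1 v 0 * repOf rC 2 v 1 - repOf rC 1 v 1 * repOf rC 2 v 0
          = v 0 * v 0 := by
        simp [repOf_apply, rC] <;> ring
      rw [this]
      exact mul_ne_zero h0 h0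
    · refine ⟨1, 2, li_of_det 1 2 ?_⟩
      have : repOf rC 1 v 1 * repOf rC 2 v 2 - repOf rC 1 v 2 * repOf rC 2 v 1
          = v 1 * v 1 := by
        simp [repOf_apply, rC] <;> ring
      rw [this]
      exact mul_ne_zero h1 h1
  · intro j
    fin_cases j
    · exact ⟨1, ![1, 0], by funext j'; fin_cases j' <;> simp [repOf_apply, rC]⟩
    · exact ⟨1, ![0, 1], by funext j'; fin_cases j' <;> simp [repOf_apply, rC]⟩
    · exact ⟨2, ![0, 1], by funext j'; fin_cases j' <;> simp [repOf_apply, rC]⟩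

lemma stableD : KStable (repOf rD) := by
  apply kStable_of
  · intro v hv
    rcases vec_cases hv with h0 | ⟨h0, h1⟩
    · refine ⟨0, 2, li_of_det 0 1 ?_⟩
      have : repOf rD 0 v 0 * repOf rD 2 v 1 - repOf rD 0 v 1 * repOf rD 2 v 0
          = v 0 * v 0 := by
        simp [repOf_apply, rD] <;> ring
      rw [this]
      exact mul_ne_zero h0 h0
    · refine ⟨0, 2, li_of_det 1 2 ?_⟩
      have : repOf rD 0 v 1 * repOf rD 2 v 2 - repOf rD 0 v 2 * repOf rD 2 v 1
          = v 1 * v 1 := by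
        simp [repOf_apply, rD] <;> ring
      rw [this]
      exact mul_ne_zero h1 h1
  · intro j
    fin_cases j
    · exact ⟨0, ![1, 0], by funext j'; fin_cases j' <;> simp [repOf_apply, rD]⟩
    · exact ⟨0, ![0, 1], by funext j'; fin_cases j' <;> simp [repOf_apply, rD]⟩
    · exact ⟨2, ![0, 1], by funext j'; fin_cases j' <;> simp [repOf_apply, rD]⟩

lemma stableE : KStable (repOf rE) := by
  apply kStable_of
  · intro v hv
    rcases vec_cases hv with h0 | ⟨h0, h1⟩
    · refine ⟨0, 2, li_of_det 0 1 ?_⟩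
      have : repOf rE 0 v 0 * repOf rE 2 v 1 - repOf rE 0 v 1 * repOf rE 2 v 0
          = v 0 * v 0 := by
        simp [repOf_apply, rE] <;> ring
      rw [this]
      exact mul_ne_zero h0 h0
    · refine ⟨0, 1, li_of_det 1 2 ?_⟩
      have : repOf rE 0 v 1 * repOf rE 1 v 2 - repOf rE 0 v 2 * repOf rE 1 v 1
          = v 1 * v 1 := by
        simp [repOf_apply, rE] <;> ring
      rw [this]
      exact mul_ne_zero h1 h1
  · intro j
    fin_cases j
    · exact ⟨0, ![1, 0], by funext j'; fin_cases j' <;> simp [repOf_apply, rE]⟩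
    · exact ⟨2, ![1, 0], by funext j'; fin_cases j' <;> simp [repOf_apply, rE]⟩
    · exact ⟨1, ![0, 1], by funext j'; fin_cases j' <;> simp [repOf_apply, rE]⟩

lemma stableF : KStable (repOf rF) := by
  apply kStable_of
  · intro v hv
    rcases vec_cases hv with h0 | ⟨h0, h1⟩
    · refine ⟨1, 0, li_of_det 0 1 ?_⟩
      have : repOf rF 1 v 0 * repOf rF 0 v 1 - repOf rF 1 v 1 * repOf rF 0 v 0
          = v 0 * v 0 := by
        simp [repOf_apply, rF] <;> ring
      rw [this]
      exact mul_ne_zero h0 h0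
    · refine ⟨1, 2, li_of_det 1 2 ?_⟩
      have : repOf rF 1 v 1 * repOf rF 2 v 2 - repOf rF 1 v 2 * repOf rF 2 v 1
          = v 1 * v 1 := by
        simp [repOf_apply, rF] <;> ring
      rw [this]
      exact mul_ne_zero h1 h1
  · intro j
    fin_cases j
    · exact ⟨1, ![1, 0], by funext j'; fin_cases j' <;> simp [repOf_apply, rF]⟩
    · exact ⟨0, ![1, 0], by funext j'; fin_cases j' <;> simp [repOf_apply, rF]⟩
    · exact ⟨2, ![0, 1], by funext j'; fin_cases j' <;> simp [repOf_apply, rF]⟩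

lemma stableG : KStable (repOf rG) := by
  apply kStable_of
  · intro v hv
    rcases vec_cases hv with h0 | ⟨h0, h1⟩
    · refine ⟨2, 1, li_of_det 0 1 ?_⟩
      have : repOf rG 2 v 0 * repOf rG 1 v 1 - repOf rG 2 v 1 * repOf rG 1 v 0
          = v 0 * v 0 := by
        simp [repOf_apply, rG] <;> ring
      rw [this]
      exact mul_ne_zero h0 h0
    · refine ⟨2, 0, li_of_det 1 2 ?_⟩
      have : repOf rG 2 v 1 * repOf rG 0 v 2 - repOf rG 2 v 2 * repOf rG 0 v 1
          = v 1 * v 1 := by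
        simp [repOf_apply, rG] <;> ring
      rw [this]
      exact mul_ne_zero h1 h1
  · intro j
    fin_cases j
    · exact ⟨2, ![1, 0], by funext j'; fin_cases j' <;> simp [repOf_apply, rG]⟩
    · exact ⟨1, ![1, 0], by funext j'; fin_cases j' <;> simp [repOf_apply, rG]⟩
    · exact ⟨0, ![0, 1], by funext j'; fin_cases j' <;> simp [repOf_apply, rG]⟩

lemma mem_Hr_of (r : Matrix (Fin 2) (Fin 3) (Fin 3 → ℂ)) (k : Fin 3) (c : ℂ) (p : Pxyz)
    (h : c • minor r k = p) : p ∈ Hr r :=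
  h ▸ Submodule.smul_mem _ c (Submodule.subset_span ⟨k, rfl⟩)

lemma memA_xy : (X 0 * X 1 : Pxyz) ∈ Hr rA :=
  mem_Hr_of rA 2 (1) _ (by
    simp [minor, minorP, rA, toPoly, Fin.sum_univ_three, MvPolynomial.smul_eq_C_mul, Matrix.vecHead, Matrix.vecTail] <;> ring)

lemma memA_yz : (X 1 * X 2 : Pxyz) ∈ Hr rA :=
  mem_Hr_of rA 0 (-1) _ (by
    simp [minor, minorP, rA, toPoly, Fin.sum_univ_three, MvPolynomial.smul_eq_C_mul, Matrix.vecHead, Matrix.vecTail] <;> ring)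

lemma memA_xz : (X 0 * X 2 : Pxyz) ∈ Hr rA :=
  mem_Hr_of rA 1 (-1) _ (by
    simp [minor, minorP, rA, toPoly, Fin.sum_univ_three, MvPolynomial.smul_eq_C_mul, Matrix.vecHead, Matrix.vecTail] <;> ring)

lemma memB_x2 : (X 0 ^ 2 : Pxyz) ∈ Hr rB :=
  mem_Hr_of rB 2 (1) _ (by
    simp [minor, minorP, rB, toPoly, Fin.sum_univ_three, MvPolynomial.smul_eq_C_mul, Matrix.vecHead, Matrix.vecTail] <;> ring)

lemma memB_y2 : (X 1 ^ 2 : Pxyz) ∈ Hr rB :=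
  mem_Hr_of rB 0 (1) _ (by
    simp [minor, minorP, rB, toPoly, Fin.sum_univ_three, MvPolynomial.smul_eq_C_mul, Matrix.vecHead, Matrix.vecTail] <;> ring)

lemma memB_xy : (X 0 * X 1 : Pxyz) ∈ Hr rB :=
  mem_Hr_of rB 1 (-1) _ (by
    simp [minor, minorP, rB, toPoly, Fin.sum_univ_three, MvPolynomial.smul_eq_C_mul, Matrix.vecHead, Matrix.vecTail] <;> ring)

lemma memC_y2 : (X 1 ^ 2 : Pxyz) ∈ Hr rC :=
  mem_Hr_of rC 2 (1) _ (by
    simp [minor, minorP, rC, toPoly, Fin.sum_univ_three, MvPolynomial.smul_eq_C_mul, Matrix.vecHead, Matrix.vecTail] <;> ring)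

lemma memC_z2 : (X 2 ^ 2 : Pxyz) ∈ Hr rC :=
  mem_Hr_of rC 0 (1) _ (by
    simp [minor, minorP, rC, toPoly, Fin.sum_univ_three, MvPolynomial.smul_eq_C_mul, Matrix.vecHead, Matrix.vecTail] <;> ring)

lemma memC_yz : (X 1 * X 2 : Pxyz) ∈ Hr rC :=
  mem_Hr_of rC 1 (-1) _ (by
    simp [minor, minorP, rC, toPoly, Fin.sum_univ_three, MvPolynomial.smul_eq_C_mul, Matrix.vecHead, Matrix.vecTail] <;> ring)

lemma memD_x2 : (X 0 ^ 2 : Pxyz) ∈ Hr rD :=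
  mem_Hr_of rD 2 (1) _ (by
    simp [minor, minorP, rD, toPoly, Fin.sum_univ_three, MvPolynomial.smul_eq_C_mul, Matrix.vecHead, Matrix.vecTail] <;> ring)

lemma memD_z2 : (X 2 ^ 2 : Pxyz) ∈ Hr rD :=
  mem_Hr_of rD 0 (1) _ (by
    simp [minor, minorP, rD, toPoly, Fin.sum_univ_three, MvPolynomial.smul_eq_C_mul, Matrix.vecHead, Matrix.vecTail] <;> ring)

lemma memD_xz : (X 0 * X 2 : Pxyz) ∈ Hr rD :=
  mem_Hr_of rD 1 (-1) _ (by
    simp [minor, minorP, rD, toPoly, Fin.sum_univ_three, MvPolynomial.smul_eq_C_mul, Matrix.vecHead, Matrix.vecTail] <;> ring)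

lemma memE_x2 : (X 0 ^ 2 : Pxyz) ∈ Hr rE :=
  mem_Hr_of rE 2 (1) _ (by
    simp [minor, minorP, rE, toPoly, Fin.sum_univ_three, MvPolynomial.smul_eq_C_mul, Matrix.vecHead, Matrix.vecTail] <;> ring)

lemma memE_yz : (X 1 * X 2 : Pxyz) ∈ Hr rE :=
  mem_Hr_of rE 0 (1) _ (by
    simp [minor, minorP, rE, toPoly, Fin.sum_univ_three, MvPolynomial.smul_eq_C_mul, Matrix.vecHead, Matrix.vecTail] <;> ring)

lemma memF_y2 : (X 1 ^ 2 : Pxyz) ∈ Hr rF :=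
  mem_Hr_of rF 2 (1) _ (by
    simp [minor, minorP, rF, toPoly, Fin.sum_univ_three, MvPolynomial.smul_eq_C_mul, Matrix.vecHead, Matrix.vecTail] <;> ring)

lemma memF_xz : (X 0 * X 2 : Pxyz) ∈ Hr rF :=
  mem_Hr_of rF 0 (1) _ (by
    simp [minor, minorP, rF, toPoly, Fin.sum_univ_three, MvPolynomial.smul_eq_C_mul, Matrix.vecHead, Matrix.vecTail] <;> ring)

lemma memG_z2 : (X 2 ^ 2 : Pxyz) ∈ Hr rG :=
  mem_Hr_of rG 2 (1) _ (by
    simp [minor, minorP, rG, toPoly, Fin.sum_univ_three, MvPolynomial.smul_eq_C_mul, Matrix.vecHead, Matrix.vecTail] <;> ring)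

lemma memG_xy : (X 0 * X 1 : Pxyz) ∈ Hr rG :=
  mem_Hr_of rG 0 (1) _ (by
    simp [minor, minorP, rG, toPoly, Fin.sum_univ_three, MvPolynomial.smul_eq_C_mul, Matrix.vecHead, Matrix.vecTail] <;> ring)



abbrev S6 : Set Pxyz := {X 0 ^ 2, X 1 ^ 2, X 2 ^ 2, X 0 * X 1, X 1 * X 2, X 0 * X 2}

lemma toPoly_hom (w : Fin 3 → ℂ) : (toPoly w).IsHomogeneous 1 := by
  apply MvPolynomial.IsHomogeneous.sum
  intro k _
  exact MvPolynomial.isHomogeneous_C_mul_X _ _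

lemma Hr_le_hom2 (r : Matrix (Fin 2) (Fin 3) (Fin 3 → ℂ)) :
    Hr r ≤ homogeneousSubmodule (Fin 3) ℂ 2 := by
  rw [Hr, Submodule.span_le]
  rintro x ⟨k, rfl⟩
  rw [SetLike.mem_coe, mem_homogeneousSubmodule]
  show (toPoly (r 0 (k + 1)) * toPoly (r 1 (k + 2)) -
      toPoly (r 0 (k + 2)) * toPoly (r 1 (k + 1))).IsHomogeneous 2
  exact ((toPoly_hom _).mul (toPoly_hom _)).sub ((toPoly_hom _).mul (toPoly_hom _))

lemma hom2_le_span : homogeneousSubmodule (Fin 3) ℂ 2 ≤ Submodule.span ℂ S6 := by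
  intro p hp
  rw [mem_homogeneousSubmodule] at hp
  rw [p.as_sum]
  refine Submodule.sum_mem _ fun d hd => ?_
  have hc : MvPolynomial.coeff d p ≠ 0 := MvPolynomial.mem_support_iff.mp hd
  have hw := hp hc
  rw [Finsupp.weight_apply, Finsupp.sum_fintype _ _ (fun i => by simp),
    Fin.sum_univ_three] at hw
  simp only [Pi.one_apply, smul_eq_mul, mul_one] at hw
  have hmono : (monomial d) (MvPolynomial.coeff d p)
      = (MvPolynomial.coeff d p) • (X 0 ^ d 0 * X 1 ^ d 1 * X 2 ^ d 2 : Pxyz) := by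
    rw [monomial_eq, MvPolynomial.smul_eq_C_mul]
    congr 1
    rw [Finsupp.prod_fintype _ _ (fun i => pow_zero _)]
    exact Fin.prod_univ_three _
  rw [hmono]
  refine Submodule.smul_mem _ _ (Submodule.subset_span ?_)
  have hcase : (d 0 = 2 ∧ d 1 = 0 ∧ d 2 = 0) ∨ (d 0 = 0 ∧ d 1 = 2 ∧ d 2 = 0) ∨
      (d 0 = 0 ∧ d 1 = 0 ∧ d 2 = 2) ∨ (d 0 = 1 ∧ d 1 = 1 ∧ d 2 = 0) ∨
      (d 0 = 0 ∧ d 1 = 1 ∧ d 2 = 1) ∨ (d 0 = 1 ∧ d 1 = 0 ∧ d 2 = 1) := by omega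
  rcases hcase with ⟨h0,h1,h2⟩|⟨h0,h1,h2⟩|⟨h0,h1,h2⟩|⟨h0,h1,h2⟩|⟨h0,h1,h2⟩|⟨h0,h1,h2⟩
  · rw [h0, h1, h2, pow_zero, pow_zero, mul_one, mul_one]
    exact Set.mem_insert _ _
  · rw [h0, h1, h2, pow_zero, pow_zero, one_mul, mul_one]
    exact Set.mem_insert_of_mem _ (Set.mem_insert _ _)
  · rw [h0, h1, h2, pow_zero, pow_zero, one_mul, one_mul]
    exact Set.mem_insert_of_mem _ (Set.mem_insert_of_mem _ (Set.mem_insert _ _))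
  · rw [h0, h1, h2, pow_one, pow_one, pow_zero, mul_one]
    exact Set.mem_insert_of_mem _ (Set.mem_insert_of_mem _ (Set.mem_insert_of_mem _
      (Set.mem_insert _ _)))
  · rw [h0, h1, h2, pow_zero, pow_one, pow_one, one_mul]
    exact Set.mem_insert_of_mem _ (Set.mem_insert_of_mem _ (Set.mem_insert_of_mem _
      (Set.mem_insert_of_mem _ (Set.mem_insert _ _))))
  · rw [h0, h1, h2, pow_one, pow_zero, pow_one, mul_one]
    exact Set.mem_insert_of_mem _ (Set.mem_insert_of_mem _ (Set.mem_insert_of_mem _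
      (Set.mem_insert_of_mem _ (Set.mem_insert_of_mem _ rfl))))

end Stmt12Aux
-- AUX END

set_option synthInstance.maxHeartbeats 1000000 in
/-- The ℂ-linear span of the set
`{ p ⊗ q : r determines a stable representation, p, q ∈ H_r }` is the whole space
`S²W ⊗ S²W` (realized as the span of the pure tensors of homogeneous degree-2 polynomials
inside `ℂ[x,y,z] ⊗ ℂ[x,y,z]`). -/
theorem stmt12 :
    Submodule.span ℂ
        {x : Pxyz ⊗[ℂ] Pxyz | ∃ r : Matrix (Fin 2) (Fin 3) (Fin 3 → ℂ),
          KStable (repOf r) ∧ ∃ p ∈ Hr r, ∃ q ∈ Hr r, x = p ⊗ₜ[ℂ] q} =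
      Submodule.span ℂ
        {x : Pxyz ⊗[ℂ] Pxyz | ∃ p ∈ homogeneousSubmodule (Fin 3) ℂ 2,
          ∃ q ∈ homogeneousSubmodule (Fin 3) ℂ 2, x = p ⊗ₜ[ℂ] q} := by
  apply le_antisymm
  · rw [Submodule.span_le]
    rintro x ⟨r, -, p, hp, q, hq, rfl⟩
    exact Submodule.subset_span ⟨p, Stmt12Aux.Hr_le_hom2 r hp, q, Stmt12Aux.Hr_le_hom2 r hq, rfl⟩
  · have h1 : Submodule.span ℂ
        {x : Pxyz ⊗[ℂ] Pxyz | ∃ p ∈ homogeneousSubmodule (Fin 3) ℂ 2,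
          ∃ q ∈ homogeneousSubmodule (Fin 3) ℂ 2, x = p ⊗ₜ[ℂ] q}
        = Submodule.map₂ (TensorProduct.mk ℂ Pxyz Pxyz)
          (homogeneousSubmodule (Fin 3) ℂ 2) (homogeneousSubmodule (Fin 3) ℂ 2) := by
      rw [Submodule.map₂_eq_span_image2]
      congr 1
      ext x
      constructor
      · rintro ⟨p, hp, q, hq, rfl⟩
        exact ⟨p, hp, q, hq, rfl⟩
      · rintro ⟨p, hp, q, hq, rfl⟩
        exact ⟨p, hp, q, hq, rfl⟩
    rw [h1]
    refine le_trans (Submodule.map₂_le_map₂ Stmt12Aux.hom2_le_span Stmt12Aux.hom2_le_span) ?_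
    rw [Submodule.map₂_span_span, Submodule.span_le]
    rintro x ⟨p, hp, q, hq, rfl⟩
    rw [SetLike.mem_coe]
    simp only [Stmt12Aux.S6, Set.mem_insert_iff, Set.mem_singleton_iff] at hp hq
    rcases hp with rfl|rfl|rfl|rfl|rfl|rfl <;> rcases hq with rfl|rfl|rfl|rfl|rfl|rfl
    · exact Submodule.subset_span ⟨Stmt12Aux.rB, Stmt12Aux.stableB, _, Stmt12Aux.memB_x2, _, Stmt12Aux.memB_x2, rfl⟩
    · exact Submodule.subset_span ⟨Stmt12Aux.rB, Stmt12Aux.stableB, _, Stmt12Aux.memB_x2, _, Stmt12Aux.memB_y2, rfl⟩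
    · exact Submodule.subset_span ⟨Stmt12Aux.rD, Stmt12Aux.stableD, _, Stmt12Aux.memD_x2, _, Stmt12Aux.memD_z2, rfl⟩
    · exact Submodule.subset_span ⟨Stmt12Aux.rB, Stmt12Aux.stableB, _, Stmt12Aux.memB_x2, _, Stmt12Aux.memB_xy, rfl⟩
    · exact Submodule.subset_span ⟨Stmt12Aux.rE, Stmt12Aux.stableE, _, Stmt12Aux.memE_x2, _, Stmt12Aux.memE_yz, rfl⟩
    · exact Submodule.subset_span ⟨Stmt12Aux.rD, Stmt12Aux.stableD, _, Stmt12Aux.memD_x2, _, Stmt12Aux.memD_xz, rfl⟩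
    · exact Submodule.subset_span ⟨Stmt12Aux.rB, Stmt12Aux.stableB, _, Stmt12Aux.memB_y2, _, Stmt12Aux.memB_x2, rfl⟩
    · exact Submodule.subset_span ⟨Stmt12Aux.rB, Stmt12Aux.stableB, _, Stmt12Aux.memB_y2, _, Stmt12Aux.memB_y2, rfl⟩
    · exact Submodule.subset_span ⟨Stmt12Aux.rC, Stmt12Aux.stableC, _, Stmt12Aux.memC_y2, _, Stmt12Aux.memC_z2, rfl⟩
    · exact Submodule.subset_span ⟨Stmt12Aux.rB, Stmt12Aux.stableB, _, Stmt12Aux.memB_y2, _, Stmt12Aux.memB_xy, rfl⟩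
    · exact Submodule.subset_span ⟨Stmt12Aux.rC, Stmt12Aux.stableC, _, Stmt12Aux.memC_y2, _, Stmt12Aux.memC_yz, rfl⟩
    · exact Submodule.subset_span ⟨Stmt12Aux.rF, Stmt12Aux.stableF, _, Stmt12Aux.memF_y2, _, Stmt12Aux.memF_xz, rfl⟩
    · exact Submodule.subset_span ⟨Stmt12Aux.rD, Stmt12Aux.stableD, _, Stmt12Aux.memD_z2, _, Stmt12Aux.memD_x2, rfl⟩
    · exact Submodule.subset_span ⟨Stmt12Aux.rC, Stmt12Aux.stableC, _, Stmt12Aux.memC_z2, _, Stmt12Aux.memC_y2, rfl⟩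
    · exact Submodule.subset_span ⟨Stmt12Aux.rC, Stmt12Aux.stableC, _, Stmt12Aux.memC_z2, _, Stmt12Aux.memC_z2, rfl⟩
    · exact Submodule.subset_span ⟨Stmt12Aux.rG, Stmt12Aux.stableG, _, Stmt12Aux.memG_z2, _, Stmt12Aux.memG_xy, rfl⟩
    · exact Submodule.subset_span ⟨Stmt12Aux.rC, Stmt12Aux.stableC, _, Stmt12Aux.memC_z2, _, Stmt12Aux.memC_yz, rfl⟩
    · exact Submodule.subset_span ⟨Stmt12Aux.rD, Stmt12Aux.stableD, _, Stmt12Aux.memD_z2, _, Stmt12Aux.memD_xz, rfl⟩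
    · exact Submodule.subset_span ⟨Stmt12Aux.rB, Stmt12Aux.stableB, _, Stmt12Aux.memB_xy, _, Stmt12Aux.memB_x2, rfl⟩
    · exact Submodule.subset_span ⟨Stmt12Aux.rB, Stmt12Aux.stableB, _, Stmt12Aux.memB_xy, _, Stmt12Aux.memB_y2, rfl⟩
    · exact Submodule.subset_span ⟨Stmt12Aux.rG, Stmt12Aux.stableG, _, Stmt12Aux.memG_xy, _, Stmt12Aux.memG_z2, rfl⟩
    · exact Submodule.subset_span ⟨Stmt12Aux.rA, Stmt12Aux.stableA, _, Stmt12Aux.memA_xy, _, Stmt12Aux.memA_xy, rfl⟩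
    · exact Submodule.subset_span ⟨Stmt12Aux.rA, Stmt12Aux.stableA, _, Stmt12Aux.memA_xy, _, Stmt12Aux.memA_yz, rfl⟩
    · exact Submodule.subset_span ⟨Stmt12Aux.rA, Stmt12Aux.stableA, _, Stmt12Aux.memA_xy, _, Stmt12Aux.memA_xz, rfl⟩
    · exact Submodule.subset_span ⟨Stmt12Aux.rE, Stmt12Aux.stableE, _, Stmt12Aux.memE_yz, _, Stmt12Aux.memE_x2, rfl⟩
    · exact Submodule.subset_span ⟨Stmt12Aux.rC, Stmt12Aux.stableC, _, Stmt12Aux.memC_yz, _, Stmt12Aux.memC_y2, rfl⟩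
    · exact Submodule.subset_span ⟨Stmt12Aux.rC, Stmt12Aux.stableC, _, Stmt12Aux.memC_yz, _, Stmt12Aux.memC_z2, rfl⟩
    · exact Submodule.subset_span ⟨Stmt12Aux.rA, Stmt12Aux.stableA, _, Stmt12Aux.memA_yz, _, Stmt12Aux.memA_xy, rfl⟩
    · exact Submodule.subset_span ⟨Stmt12Aux.rA, Stmt12Aux.stableA, _, Stmt12Aux.memA_yz, _, Stmt12Aux.memA_yz, rfl⟩
    · exact Submodule.subset_span ⟨Stmt12Aux.rA, Stmt12Aux.stableA, _, Stmt12Aux.memA_yz, _, Stmt12Aux.memA_xz, rfl⟩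
    · exact Submodule.subset_span ⟨Stmt12Aux.rD, Stmt12Aux.stableD, _, Stmt12Aux.memD_xz, _, Stmt12Aux.memD_x2, rfl⟩
    · exact Submodule.subset_span ⟨Stmt12Aux.rF, Stmt12Aux.stableF, _, Stmt12Aux.memF_xz, _, Stmt12Aux.memF_y2, rfl⟩
    · exact Submodule.subset_span ⟨Stmt12Aux.rD, Stmt12Aux.stableD, _, Stmt12Aux.memD_xz, _, Stmt12Aux.memD_z2, rfl⟩
    · exact Submodule.subset_span ⟨Stmt12Aux.rA, Stmt12Aux.stableA, _, Stmt12Aux.memA_xz, _, Stmt12Aux.memA_xy, rfl⟩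
    · exact Submodule.subset_span ⟨Stmt12Aux.rA, Stmt12Aux.stableA, _, Stmt12Aux.memA_xz, _, Stmt12Aux.memA_yz, rfl⟩
    · exact Submodule.subset_span ⟨Stmt12Aux.rA, Stmt12Aux.stableA, _, Stmt12Aux.memA_xz, _, Stmt12Aux.memA_xz, rfl⟩
end
end

section
/- Let R be a commutative ring and C a cochain complex of R-modules indexed by ℤ with Cʲ = 0 for all j > q and with C^q finitely generated. If the cohomology H^q(C) is nonzero, then there exists a maximal ideal m of R such that H^q(C ⊗_R R/m) ≠ 0, where C ⊗_R R/m denotes the cochain complex with terms Cʲ ⊗_R R/m and the induced differentials. -/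
/-- Let `R` be a commutative ring and `C` a cochain complex of `R`-modules
indexed by ℤ with `Cʲ = 0` for all `j > q` and with `C^q` finitely generated.  If the
cohomology `H^q(C)` — that is, the cokernel of the differential `C^{q−1} → C^q` — is nonzero,
then there exists a maximal ideal `m` of `R` such that `H^q(C ⊗_R R/m) ≠ 0`, where
`C ⊗_R R/m` is the cochain complex with terms `Cʲ ⊗_R R/m` and the induced differentials.
(The cokernel of a map is nonzero iff the map's range is not the whole module.) -/
theorem stmt14 (R : Type*) [CommRing R] (q : ℤ)
    (C : ℤ → Type*) [∀ j, AddCommGroup (C j)] [∀ j, Module R (C j)]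
    (d : ∀ j, C j →ₗ[R] C (j + 1))
    (hcomplex : ∀ j, (d (j + 1)).comp (d j) = 0)
    (hzero : ∀ j, q < j → Subsingleton (C j))
    (hfg : Module.Finite R (C q))
    (hne : LinearMap.range (d (q - 1)) ≠ ⊤) :
    ∃ m : Ideal R, m.IsMaximal ∧
      LinearMap.range (LinearMap.rTensor (R ⧸ m) (d (q - 1))) ≠ ⊤ := by
  haveI hfg' : Module.Finite R (C (q - 1 + 1)) := by
    rw [sub_add_cancel]; exact hfg
  set f := d (q - 1) with hf
  set Q := C (q - 1 + 1) ⧸ LinearMap.range f with hQ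
  haveI : Module.Finite R Q := Module.Finite.quotient R _
  haveI : Nontrivial Q := Submodule.Quotient.nontrivial_iff.mpr hne
  have hann : Module.annihilator R Q ≠ ⊤ := by
    intro h
    obtain ⟨x, y, hxy⟩ := exists_pair_ne Q
    have h1 : (1 : R) ∈ Module.annihilator R Q := h ▸ Submodule.mem_top
    have hx := Module.mem_annihilator.mp h1 x
    have hy := Module.mem_annihilator.mp h1 y
    simp only [one_smul] at hx hy
    exact hxy (hx.trans hy.symm)
  obtain ⟨m, hm, hle⟩ := Ideal.exists_le_maximal _ hann
  refine ⟨m, hm, fun htop => ?_⟩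
  -- the quotient map
  set π := (LinearMap.range f).mkQ with hπ
  have hπf : π ∘ₗ f = 0 := by
    ext x
    simp [π, Submodule.Quotient.mk_eq_zero]
  -- Q ⊗ R/m is subsingleton
  have hsub : Subsingleton (TensorProduct R Q (R ⧸ m)) := by
    constructor
    intro a b
    have hsurj : Function.Surjective (LinearMap.rTensor (R ⧸ m) π) :=
      LinearMap.rTensor_surjective _ (Submodule.mkQ_surjective _)
    have key : ∀ z : TensorProduct R Q (R ⧸ m), z = 0 := by
      intro z
      obtain ⟨w, rfl⟩ := hsurj z
      have hw : w ∈ LinearMap.range (LinearMap.rTensor (R ⧸ m) f) := htop ▸ Submodule.mem_top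
      obtain ⟨v, rfl⟩ := hw
      have : LinearMap.rTensor (R ⧸ m) π ∘ₗ LinearMap.rTensor (R ⧸ m) f = 0 := by
        rw [← LinearMap.rTensor_comp, hπf, LinearMap.rTensor_zero]
      calc LinearMap.rTensor (R ⧸ m) π (LinearMap.rTensor (R ⧸ m) f v)
          = (LinearMap.rTensor (R ⧸ m) π ∘ₗ LinearMap.rTensor (R ⧸ m) f) v := rfl
        _ = 0 := by rw [this]; rfl
    rw [key a, key b]
  -- transfer to Q ⧸ m • ⊤
  haveI hsub2 : Subsingleton (Q ⧸ (m • ⊤ : Submodule R Q)) :=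
    (TensorProduct.tensorQuotEquivQuotSMul Q m).symm.toEquiv.subsingleton
  have hsmul : (m • ⊤ : Submodule R Q) = ⊤ :=
    Submodule.Quotient.subsingleton_iff.mp hsub2
  obtain ⟨r, hr1, hr0⟩ :=
    Submodule.exists_sub_one_mem_and_smul_eq_zero_of_fg_of_le_smul m (⊤ : Submodule R Q)
      (Module.Finite.fg_top) (by rw [hsmul])
  have hrann : r ∈ Module.annihilator R Q :=
    Module.mem_annihilator.mpr fun x => hr0 x Submodule.mem_top
  have h1m : (1 : R) ∈ m := by
    have := m.sub_mem (hle hrann) hr1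
    simpa using this
  exact hm.ne_top (Ideal.eq_top_of_isUnit_mem _ h1m isUnit_one)
end
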